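/- arXiv:1605.01617 — 5 statements merged into one kernel-verified Lean document; each statement's English description precedes it below -/
import Mathlib

section
/- Suppose u and v are positive solutions of u'' + λ f(u) - h(x) = 0 and v'' + λ₁ f(v) - h(x) = 0 respectively on (-1,1), both vanishing at x = ±1, with the same maximum value u(0) = v(0). Then λ = λ₁ and u ≡ v. In other words, the maximum value u(0) uniquely identifies the solution pair (λ, u). -/
open Set Real Filter Function


lemma reg_hasDerivAt {w : ℝ → ℝ} (hw : ContDiffOn ℝ 2 w (Icc (-1) 1)) :
    ∀ x ∈ Ioo (-1:ℝ) 1, HasDerivAt w (deriv w x) x := by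
  intro x hx
  have hd : DifferentiableAt ℝ w x := by
    have := (hw.differentiableOn (by norm_num)).differentiableAt
      (Icc_mem_nhds hx.1 hx.2)
    exact this
  exact hd.hasDerivAt

lemma reg_deriv_eq {w : ℝ → ℝ} (hw : ContDiffOn ℝ 2 w (Icc (-1) 1)) :
    ∀ x ∈ Ioo (-1:ℝ) 1, derivWithin w (Icc (-1) 1) x = deriv w x := by
  intro x hx
  have hd : DifferentiableAt ℝ w x :=
    (hw.differentiableOn (by norm_num)).differentiableAt (Icc_mem_nhds hx.1 hx.2)
  exact hd.derivWithin ((uniqueDiffOn_Icc (by norm_num)) x (Ioo_subset_Icc_self hx))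

lemma reg_contOn_deriv {w : ℝ → ℝ} (hw : ContDiffOn ℝ 2 w (Icc (-1) 1)) :
    ContinuousOn (deriv w) (Ioo (-1) 1) := by
  have h1 : ContDiffOn ℝ 1 (derivWithin w (Icc (-1) 1)) (Icc (-1) 1) :=
    hw.derivWithin (uniqueDiffOn_Icc (by norm_num)) (by norm_num)
  exact (h1.continuousOn.mono Ioo_subset_Icc_self).congr (fun x hx => (reg_deriv_eq hw x hx).symm)

lemma reg_hasDerivAt2 {w : ℝ → ℝ} (hw : ContDiffOn ℝ 2 w (Icc (-1) 1)) :
    ∀ x ∈ Ioo (-1:ℝ) 1, HasDerivAt (deriv w) (deriv (deriv w) x) x := by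
  intro x hx
  have h1 : ContDiffOn ℝ 1 (derivWithin w (Icc (-1) 1)) (Icc (-1) 1) :=
    hw.derivWithin (uniqueDiffOn_Icc (by norm_num)) (by norm_num)
  have hd : DifferentiableAt ℝ (derivWithin w (Icc (-1) 1)) x :=
    (h1.differentiableOn (by norm_num)).differentiableAt (Icc_mem_nhds hx.1 hx.2)
  have heq : deriv w =ᶠ[nhds x] derivWithin w (Icc (-1) 1) := by
    filter_upwards [Ioo_mem_nhds hx.1 hx.2] with y hy
    exact (reg_deriv_eq hw y hy).symm
  exact (hd.congr_of_eventuallyEq heq).hasDerivAt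

lemma my_anti {w : ℝ → ℝ} (hcont : ContinuousOn w (Icc (-1) 1))
    (hdec : ∀ x ∈ Ioc (0:ℝ) 1, deriv w x < 0) : StrictAntiOn w (Icc 0 1) := by
  apply strictAntiOn_of_deriv_neg (convex_Icc 0 1)
    (hcont.mono (Icc_subset_Icc (by norm_num) le_rfl))
  intro x hx
  rw [interior_Icc] at hx
  exact hdec x ⟨hx.1, hx.2.le⟩

lemma even_deriv_zero {w : ℝ → ℝ} (hw : HasDerivAt w (deriv w 0) 0)
    (heven : ∀ x ∈ Icc (-1:ℝ) 1, w (-x) = w x) : deriv w 0 = 0 := by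
  have hw' : HasDerivAt w (deriv w 0) (-0 : ℝ) := by simpa using hw
  have h2 : HasDerivAt (fun x => w (-x)) (-(deriv w 0)) 0 := by
    have := hw'.comp 0 (hasDerivAt_neg (0:ℝ))
    simp [mul_comm] at this
    exact this
  have heq : (fun x => w (-x)) =ᶠ[nhds (0:ℝ)] w := by
    filter_upwards [Icc_mem_nhds (show (-1:ℝ) < 0 by norm_num) one_pos] with y hy
    exact heven y hy
  have h3 : HasDerivAt w (-(deriv w 0)) 0 := by
    exact h2.congr_of_eventuallyEq heq.symm
  have := h3.deriv
  linarith [h3.deriv]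

lemma h_mono (h : ℝ → ℝ) (hh1 : ContinuousOn h (Icc (-1) 1))
    (hh2 : ContDiffOn ℝ 1 h (Ioo (-1) 1))
    (hhmono : ∀ x ∈ Ioo (-1:ℝ) 1, 0 ≤ x * deriv h x) :
    MonotoneOn h (Icc 0 1) := by
  apply monotoneOn_of_deriv_nonneg (convex_Icc 0 1)
    (hh1.mono (Icc_subset_Icc (by norm_num) le_rfl))
  · intro x hx
    rw [interior_Icc] at hx
    have hx' : x ∈ Ioo (-1:ℝ) 1 := ⟨by linarith [hx.1], hx.2⟩
    exact ((hh2.differentiableOn (by norm_num)).differentiableAt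
      (Ioo_mem_nhds hx'.1 hx'.2)).differentiableWithinAt
  · intro x hx
    rw [interior_Icc] at hx
    have hx' : x ∈ Ioo (-1:ℝ) 1 := ⟨by linarith [hx.1], hx.2⟩
    have := hhmono x hx'
    exact nonneg_of_mul_nonneg_right this hx.1
    
lemma sign_helper {a b : ℝ} (ha : a < 0) (hb : b < 0) : (0 < a / b - 1 ↔ b^2 < a^2) := by
  rw [sub_pos, lt_div_iff_of_neg hb]
  constructor
  · intro hab; nlinarith
  · intro hab; nlinarith

section Inv
variable {w : ℝ → ℝ} {p : ℝ}
  (hp : 0 < p) (hcont : ContinuousOn w (Icc 0 1))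
  (hanti : StrictAntiOn w (Icc 0 1)) (h0 : w 0 = p) (h1 : w 1 = 0)

include hp hcont hanti h0 h1

set_option linter.unusedSectionVars false in
lemma myinv_surj : ∀ t ∈ Icc (0:ℝ) p, ∃ x ∈ Icc (0:ℝ) 1, w x = t := by
  intro t ht
  have := intermediate_value_Icc' (by norm_num : (0:ℝ) ≤ 1) hcont
  have ht' : t ∈ Icc (w 1) (w 0) := by rw [h0, h1]; exact ht
  obtain ⟨x, hx, hwx⟩ := this ht'
  exact ⟨x, hx, hwx⟩

lemma myinv_mem {t : ℝ} (ht : t ∈ Icc (0:ℝ) p) : invFunOn w (Icc 0 1) t ∈ Icc (0:ℝ) 1 :=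
  invFunOn_mem (myinv_surj hp hcont hanti h0 h1 t ht)

lemma myinv_eq {t : ℝ} (ht : t ∈ Icc (0:ℝ) p) : w (invFunOn w (Icc 0 1) t) = t :=
  invFunOn_eq (myinv_surj hp hcont hanti h0 h1 t ht)

lemma myinv_lt {t x' : ℝ} (ht : t ∈ Icc (0:ℝ) p) (hx' : x' ∈ Icc (0:ℝ) 1)
    (hv : w x' < t) : invFunOn w (Icc 0 1) t < x' := by
  by_contra hle
  push_neg at hle
  have hm := myinv_mem hp hcont hanti h0 h1 ht
  have : w (invFunOn w (Icc 0 1) t) ≤ w x' := by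
    rcases eq_or_lt_of_le hle with he | hl
    · rw [he]
    · exact (hanti hx' hm hl).le
  rw [myinv_eq hp hcont hanti h0 h1 ht] at this
  linarith

lemma myinv_gt {t x' : ℝ} (ht : t ∈ Icc (0:ℝ) p) (hx' : x' ∈ Icc (0:ℝ) 1)
    (hv : t < w x') : x' < invFunOn w (Icc 0 1) t := by
  by_contra hle
  push_neg at hle
  have hm := myinv_mem hp hcont hanti h0 h1 ht
  have : w x' ≤ w (invFunOn w (Icc 0 1) t) := by
    rcases eq_or_lt_of_le hle with he | hl
    · rw [he]
    · exact (hanti hm hx' hl).le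
  rw [myinv_eq hp hcont hanti h0 h1 ht] at this
  linarith

lemma myinv_top : invFunOn w (Icc 0 1) p = 0 := by
  have hm := myinv_mem hp hcont hanti h0 h1 (show p ∈ Icc 0 p from ⟨hp.le, le_rfl⟩)
  have he := myinv_eq hp hcont hanti h0 h1 (show p ∈ Icc 0 p from ⟨hp.le, le_rfl⟩)
  by_contra hne
  have : (0:ℝ) < invFunOn w (Icc 0 1) p := lt_of_le_of_ne hm.1 (Ne.symm hne)
  have := hanti (left_mem_Icc.2 (by norm_num)) hm this
  rw [he, h0] at this
  linarith

lemma myinv_bot : invFunOn w (Icc 0 1) 0 = 1 := by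
  have hm := myinv_mem hp hcont hanti h0 h1 (show (0:ℝ) ∈ Icc 0 p from ⟨le_rfl, hp.le⟩)
  have he := myinv_eq hp hcont hanti h0 h1 (show (0:ℝ) ∈ Icc 0 p from ⟨le_rfl, hp.le⟩)
  by_contra hne
  have : invFunOn w (Icc 0 1) 0 < 1 := lt_of_le_of_ne hm.2 hne
  have := hanti hm (right_mem_Icc.2 (by norm_num)) this
  rw [he, h1] at this
  linarith

lemma myinv_cont : ContinuousOn (invFunOn w (Icc 0 1)) (Icc 0 p) := by
  intro t₀ ht₀
  set g := invFunOn w (Icc 0 1) with hg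
  rw [Metric.continuousWithinAt_iff]
  intro ε hε
  set x₀ := g t₀ with hx₀
  have hx₀m : x₀ ∈ Icc (0:ℝ) 1 := myinv_mem hp hcont hanti h0 h1 ht₀
  have hwx₀ : w x₀ = t₀ := myinv_eq hp hcont hanti h0 h1 ht₀
  -- upper bound control
  have hup : ∃ δ₁ > 0, ∀ t ∈ Icc (0:ℝ) p, dist t t₀ < δ₁ → g t < x₀ + ε := by
    by_cases hc : x₀ + ε / 2 ≤ 1
    · have hmem : x₀ + ε/2 ∈ Icc (0:ℝ) 1 := ⟨by linarith [hx₀m.1], hc⟩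
      have hlt : w (x₀ + ε/2) < t₀ := by
        rw [← hwx₀]; exact hanti hx₀m hmem (by linarith)
      refine ⟨t₀ - w (x₀ + ε/2), by linarith, fun t ht hd => ?_⟩
      rw [Real.dist_eq, abs_lt] at hd
      have : w (x₀ + ε/2) < t := by linarith
      have := myinv_lt hp hcont hanti h0 h1 ht hmem this
      linarith
    · refine ⟨1, one_pos, fun t ht _ => ?_⟩
      have := (myinv_mem hp hcont hanti h0 h1 ht).2
      push_neg at hc
      linarith
  have hdn : ∃ δ₂ > 0, ∀ t ∈ Icc (0:ℝ) p, dist t t₀ < δ₂ → x₀ - ε < g t := by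
    by_cases hc : 0 ≤ x₀ - ε / 2
    · have hmem : x₀ - ε/2 ∈ Icc (0:ℝ) 1 := ⟨hc, by linarith [hx₀m.2]⟩
      have hlt : t₀ < w (x₀ - ε/2) := by
        rw [← hwx₀]; exact hanti hmem hx₀m (by linarith)
      refine ⟨w (x₀ - ε/2) - t₀, by linarith, fun t ht hd => ?_⟩
      rw [Real.dist_eq, abs_lt] at hd
      have : t < w (x₀ - ε/2) := by linarith
      have := myinv_gt hp hcont hanti h0 h1 ht hmem this
      linarith
    · refine ⟨1, one_pos, fun t ht _ => ?_⟩
      have := (myinv_mem hp hcont hanti h0 h1 ht).1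
      push_neg at hc
      linarith
  obtain ⟨δ₁, hδ₁, hH₁⟩ := hup
  obtain ⟨δ₂, hδ₂, hH₂⟩ := hdn
  refine ⟨min δ₁ δ₂, lt_min hδ₁ hδ₂, fun t ht hd => ?_⟩
  rw [Real.dist_eq, abs_lt]
  constructor
  · have := hH₂ t ht (lt_of_lt_of_le hd (min_le_right _ _)); linarith
  · have := hH₁ t ht (lt_of_lt_of_le hd (min_le_left _ _)); linarith

end Inv


lemma sign_helper_neg {a b : ℝ} (ha : a < 0) (hb : b < 0) : (a / b - 1 < 0 ↔ a^2 < b^2) := by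
  rw [sub_neg, div_lt_one_of_neg hb]
  constructor
  · intro hab; nlinarith
  · intro hab; nlinarith

set_option maxHeartbeats 1000000 in
theorem key_lemma
    (lam lam1 : ℝ) (f h u v : ℝ → ℝ)
    (hlam : 0 < lam) (hlam1 : 0 < lam1)
    (hf : Continuous f) (hfpos : ∀ s : ℝ, 0 < s → 0 < f s)
    (hh1 : ContinuousOn h (Icc (-1) 1))
    (hh2 : ContDiffOn ℝ 1 h (Ioo (-1) 1))
    (hhmono : ∀ x ∈ Ioo (-1:ℝ) 1, 0 ≤ x * deriv h x)
    (hu : ContDiffOn ℝ 2 u (Icc (-1) 1))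
    (hupos : ∀ x ∈ Ioo (-1:ℝ) 1, 0 < u x)
    (hueq : ∀ x ∈ Ioo (-1:ℝ) 1, deriv (deriv u) x + lam * f (u x) - h x = 0)
    (hubc2 : u 1 = 0)
    (hueven : ∀ x ∈ Icc (-1:ℝ) 1, u (-x) = u x)
    (hudec : ∀ x ∈ Ioc (0:ℝ) 1, deriv u x < 0)
    (hv : ContDiffOn ℝ 2 v (Icc (-1) 1))
    (hvpos : ∀ x ∈ Ioo (-1:ℝ) 1, 0 < v x)
    (hveq : ∀ x ∈ Ioo (-1:ℝ) 1, deriv (deriv v) x + lam1 * f (v x) - h x = 0)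
    (hvbc2 : v 1 = 0)
    (hveven : ∀ x ∈ Icc (-1:ℝ) 1, v (-x) = v x)
    (hvdec : ∀ x ∈ Ioc (0:ℝ) 1, deriv v x < 0)
    (hmax : u 0 = v 0)
    (hle : lam ≤ lam1) :
    lam = lam1 ∧ ∀ x ∈ Icc (0:ℝ) 1, v x ≤ u x := by
  have hsub : Icc (0:ℝ) 1 ⊆ Icc (-1) 1 := Icc_subset_Icc (by norm_num) le_rfl
  have hsubo : Ioo (0:ℝ) 1 ⊆ Ioo (-1) 1 := fun x hx => ⟨by linarith [hx.1], hx.2⟩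
  have hsubo' : Ico (0:ℝ) 1 ⊆ Ioo (-1) 1 := fun x hx => ⟨by linarith [hx.1], hx.2⟩
  set p := u 0 with hpdef
  have h0m : (0:ℝ) ∈ Ioo (-1:ℝ) 1 := by norm_num
  have hp : 0 < p := hupos 0 h0m
  have hv0 : v 0 = p := hmax.symm
  have ucont : ContinuousOn u (Icc (-1) 1) := hu.continuousOn
  have vcont : ContinuousOn v (Icc (-1) 1) := hv.continuousOn
  have ucont01 : ContinuousOn u (Icc 0 1) := ucont.mono hsub
  have vcont01 : ContinuousOn v (Icc 0 1) := vcont.mono hsub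
  have uanti : StrictAntiOn u (Icc 0 1) := my_anti ucont hudec
  have vanti : StrictAntiOn v (Icc 0 1) := my_anti vcont hvdec
  -- u maps [0,1] into [0,p]
  have humem : ∀ x ∈ Icc (0:ℝ) 1, u x ∈ Icc 0 p := by
    intro x hx
    constructor
    · have := uanti.antitoneOn hx (right_mem_Icc.2 (by norm_num)) hx.2
      rw [hubc2] at this; exact this
    · exact uanti.antitoneOn (left_mem_Icc.2 (by norm_num)) hx hx.1
  have hustrict : ∀ x ∈ Ioo (0:ℝ) 1, u x ∈ Ioo 0 p := by
    intro x hx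
    exact ⟨hupos x (hsubo hx), uanti (left_mem_Icc.2 (by norm_num))
      ⟨hx.1.le, hx.2.le⟩ hx.1⟩
  -- inverse of v
  set xv := invFunOn v (Icc 0 1) with hxvdef
  set y := fun x => xv (u x) with hydef
  have hymem : ∀ x ∈ Icc (0:ℝ) 1, y x ∈ Icc 0 1 :=
    fun x hx => myinv_mem hp vcont01 vanti hv0 hvbc2 (humem x hx)
  have hvy : ∀ x ∈ Icc (0:ℝ) 1, v (y x) = u x :=
    fun x hx => myinv_eq hp vcont01 vanti hv0 hvbc2 (humem x hx)
  have hy0 : y 0 = 0 := myinv_top hp vcont01 vanti hv0 hvbc2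
  have hy1 : y 1 = 1 := by
    show xv (u 1) = 1
    rw [hubc2]
    exact myinv_bot hp vcont01 vanti hv0 hvbc2
  have hyoo : ∀ x ∈ Ioo (0:ℝ) 1, y x ∈ Ioo 0 1 := by
    intro x hx
    have hm := hymem x ⟨hx.1.le, hx.2.le⟩
    have he := hvy x ⟨hx.1.le, hx.2.le⟩
    have hus := hustrict x hx
    constructor
    · rcases eq_or_lt_of_le hm.1 with h' | h'
      · exfalso; rw [← h'] at he; rw [hv0] at he; exact absurd he.symm (ne_of_lt hus.2)
      · exact h'
    · rcases eq_or_lt_of_le hm.2 with h' | h'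
      · exfalso; rw [h'] at he; rw [hvbc2] at he; exact absurd he.symm (ne_of_gt hus.1)
      · exact h'
  have hyIco : ∀ x ∈ Ico (0:ℝ) 1, y x ∈ Ico 0 1 := by
    intro x hx
    rcases eq_or_lt_of_le hx.1 with h' | h'
    · rw [← h', hy0]; constructor <;> norm_num
    · have := hyoo x ⟨h', hx.2⟩; exact ⟨this.1.le, this.2⟩
  have hycont : ContinuousOn y (Icc 0 1) :=
    (myinv_cont hp vcont01 vanti hv0 hvbc2).comp ucont01 humem
  -- derivatives
  have hu'0 : deriv u 0 = 0 := even_deriv_zero (reg_hasDerivAt hu 0 h0m) hueven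
  have hv'0 : deriv v 0 = 0 := even_deriv_zero (reg_hasDerivAt hv 0 h0m) hveven
  have hu'neg : ∀ x ∈ Ioo (0:ℝ) 1, deriv u x < 0 := fun x hx => hudec x ⟨hx.1, hx.2.le⟩
  have hv'negy : ∀ x ∈ Ioo (0:ℝ) 1, deriv v (y x) < 0 := by
    intro x hx
    have := hyoo x hx
    exact hvdec (y x) ⟨this.1, this.2.le⟩
  have hy' : ∀ x ∈ Ioo (0:ℝ) 1, HasDerivAt y (deriv u x / deriv v (y x)) x := by
    intro x hx
    have hus := hustrict x hx
    have hyx := hyoo x hx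
    have hvy' : HasDerivAt v (deriv v (y x)) (y x) := reg_hasDerivAt hv (y x) (hsubo hyx)
    have hne : deriv v (y x) ≠ 0 := (hv'negy x hx).ne
    have hcg : ContinuousAt xv (u x) :=
      ((myinv_cont hp vcont01 vanti hv0 hvbc2) (u x)
        ⟨hus.1.le, hus.2.le⟩).continuousAt (Icc_mem_nhds hus.1 hus.2)
    have hev : ∀ᶠ t in nhds (u x), v (xv t) = t := by
      filter_upwards [Ioo_mem_nhds hus.1 hus.2] with t ht
      exact myinv_eq hp vcont01 vanti hv0 hvbc2 ⟨ht.1.le, ht.2.le⟩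
    have hinv : HasDerivAt xv (deriv v (y x))⁻¹ (u x) :=
      HasDerivAt.of_local_left_inverse hcg hvy' hne hev
    have := hinv.comp x (reg_hasDerivAt hu x (hsubo hx))
    rw [div_eq_inv_mul]
    exact this
  set D := fun x => (deriv u x)^2/2 - (deriv v (y x))^2/2 with hDdef
  set Z := fun x => y x - x with hZdef
  have hZ0 : Z 0 = 0 := by simp [hZdef, hy0]
  have hZ1 : Z 1 = 0 := by simp [hZdef, hy1]
  have hD0 : D 0 = 0 := by simp [hDdef, hy0, hu'0, hv'0]
  have hZcont : ContinuousOn Z (Icc 0 1) := hycont.sub continuousOn_id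
  have hDcont : ContinuousOn D (Ico 0 1) := by
    apply ContinuousOn.sub
    · exact (((reg_contOn_deriv hu).mono hsubo').pow 2).div_const 2
    · apply ContinuousOn.div_const
      apply ContinuousOn.pow
      apply (reg_contOn_deriv hv).comp (hycont.mono Ico_subset_Icc_self)
      intro x hx
      exact hsubo' (hyIco x hx)
  have hZ' : ∀ x ∈ Ioo (0:ℝ) 1, HasDerivAt Z (deriv u x / deriv v (y x) - 1) x :=
    fun x hx => (hy' x hx).sub (hasDerivAt_id x)
  have hZsgn_pos : ∀ x ∈ Ioo (0:ℝ) 1, (0 < deriv u x / deriv v (y x) - 1 ↔ 0 < D x) := by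
    intro x hx
    rw [sign_helper (hu'neg x hx) (hv'negy x hx)]
    constructor <;> intro h' <;> simp only [hDdef] at * <;> nlinarith
  have hZsgn_neg : ∀ x ∈ Ioo (0:ℝ) 1, (deriv u x / deriv v (y x) - 1 < 0 ↔ D x < 0) := by
    intro x hx
    rw [sign_helper_neg (hu'neg x hx) (hv'negy x hx)]
    constructor <;> intro h' <;> simp only [hDdef] at * <;> nlinarith
  set Bf := fun x => (h x - h (y x)) + (lam1 - lam) * f (u x) with hBfdef
  have hBfcont : ContinuousOn Bf (Icc 0 1) := by
    rw [hBfdef]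
    apply ContinuousOn.add
    · exact (hh1.mono hsub).sub
        ((hh1.comp hycont (fun x hx => hsub (hymem x hx))))
    · exact continuousOn_const.mul (hf.comp_continuousOn ucont01)
  have hD' : ∀ x ∈ Ioo (0:ℝ) 1,
      HasDerivAt D (deriv u x * Bf x) x := by
    intro x hx
    simp only [hBfdef]
    have hxm := hsubo hx
    have hyxm := hsubo (hyoo x hx)
    have h1 : HasDerivAt (fun t => (deriv u t)^2/2)
        ((2 * deriv u x ^ 1 * deriv (deriv u) x) / 2) x :=
      ((reg_hasDerivAt2 hu x hxm).pow 2).div_const 2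
    have h2 : HasDerivAt (fun t => (deriv v (y t))^2/2)
        ((2 * deriv v (y x) ^ 1 * deriv (deriv v) (y x)) * (deriv u x / deriv v (y x)) / 2) x := by
      have hout : HasDerivAt (fun s => (deriv v s)^2)
          (2 * deriv v (y x) ^ 1 * deriv (deriv v) (y x)) (y x) :=
        (reg_hasDerivAt2 hv (y x) hyxm).pow 2
      exact ((hout.comp x (hy' x hx)).div_const 2)
    have h3 := h1.sub h2
    have hu2 : deriv (deriv u) x = h x - lam * f (u x) := by
      have := hueq x hxm; linarith
    have hv2 : deriv (deriv v) (y x) = h (y x) - lam1 * f (u x) := by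
      have := hveq (y x) hyxm
      rw [hvy x ⟨hx.1.le, hx.2.le⟩] at this
      linarith
    have hne : deriv v (y x) ≠ 0 := (hv'negy x hx).ne
    refine HasDerivAt.congr_deriv h3 ?_
    rw [hu2, hv2]
    field_simp
    ring
  have hmono' : MonotoneOn h (Icc 0 1) := h_mono h hh1 hh2 hhmono
  have hmvtZ : ∀ s t : ℝ, 0 ≤ s → s < t → t ≤ 1 →
      ∃ c ∈ Ioo s t, deriv u c / deriv v (y c) - 1 = (Z t - Z s) / (t - s) := by
    intro s t hs hst ht1
    exact exists_hasDerivAt_eq_slope Z (fun c => deriv u c / deriv v (y c) - 1) hst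
      (hZcont.mono (Icc_subset_Icc hs ht1))
      (fun c hc => hZ' c ⟨lt_of_le_of_lt hs hc.1, lt_of_lt_of_le hc.2 ht1⟩)
  have hmvtD : ∀ s t : ℝ, 0 ≤ s → s < t → t < 1 →
      ∃ c ∈ Ioo s t, deriv u c * Bf c = (D t - D s) / (t - s) := by
    intro s t hs hst ht1
    exact exists_hasDerivAt_eq_slope D (fun c => deriv u c * Bf c) hst
      (hDcont.mono (fun z hz => ⟨le_trans hs hz.1, lt_of_le_of_lt hz.2 ht1⟩))
      (fun c hc => hD' c ⟨lt_of_le_of_lt hs hc.1, lt_trans hc.2 ht1⟩)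
  clear_value p xv y D Z Bf
  have heqlam : lam = lam1 := by
    by_contra hne
    have hlt : lam < lam1 := lt_of_le_of_ne hle hne
    -- bracket positive near 0
    have hBf0 : 0 < Bf 0 := by
      simp only [hBfdef, hy0]
      rw [← hpdef]
      have : 0 < f p := hfpos p hp
      nlinarith
    have hev0 : ∀ᶠ x in nhdsWithin 0 (Icc (0:ℝ) 1), 0 < Bf x :=
      (hBfcont 0 (left_mem_Icc.2 zero_le_one)).eventually (eventually_gt_nhds hBf0)
    rw [eventually_nhdsWithin_iff] at hev0
    obtain ⟨δ, hδpos, hδ⟩ := Metric.eventually_nhds_iff.1 hev0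
    set δ₁ := min δ 1 with hδ₁def
    have hδ₁pos : 0 < δ₁ := lt_min hδpos one_pos
    have hδ₁le : δ₁ ≤ 1 := min_le_right _ _
    have hBfpos0 : ∀ x ∈ Icc (0:ℝ) 1, x < δ₁ → 0 < Bf x := by
      intro x hx hxδ
      refine hδ ?_ hx
      rw [Real.dist_eq, abs_sub_lt_iff]
      constructor
      · linarith [lt_of_lt_of_le hxδ (min_le_left δ 1)]
      · linarith [hx.1, hδpos]
    have hDneg0 : ∀ x ∈ Ioo (0:ℝ) 1, x < δ₁ → D x < 0 := by
      intro x hx hxδ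
      obtain ⟨c, hc, hceq⟩ := hmvtD 0 x le_rfl hx.1 hx.2
      have hdu : deriv u c < 0 := hu'neg c ⟨hc.1, lt_trans hc.2 hx.2⟩
      have hBc : 0 < Bf c :=
        hBfpos0 c ⟨hc.1.le, le_trans hc.2.le hx.2.le⟩ (lt_trans hc.2 hxδ)
      rw [hD0, sub_zero, sub_zero] at hceq
      have hDx : D x = (deriv u c * Bf c) * x := by
        rw [hceq, div_mul_cancel₀ _ (ne_of_gt hx.1)]
      rw [hDx]
      have := mul_neg_of_neg_of_pos hdu hBc
      exact mul_neg_of_neg_of_pos this hx.1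
    -- D < 0 on (0,1)
    have hDneg : ∀ x ∈ Ioo (0:ℝ) 1, D x < 0 := by
      by_contra hDc
      push_neg at hDc
      obtain ⟨x₁, hx₁, hDx₁⟩ := hDc
      have hδx₁ : δ₁ ≤ x₁ := by
        by_contra hlt'
        push_neg at hlt'
        exact absurd (hDneg0 x₁ hx₁ hlt') (not_lt.2 hDx₁)
      set E := Icc δ₁ x₁ ∩ D ⁻¹' (Ici 0) with hEdef
      have hEclosed : IsClosed E :=
        (hDcont.mono (fun z hz => ⟨le_trans hδ₁pos.le hz.1,
          lt_of_le_of_lt hz.2 hx₁.2⟩)).preimage_isClosed_of_isClosed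
          isClosed_Icc isClosed_Ici
      have hEne : E.Nonempty := ⟨x₁, ⟨hδx₁, le_rfl⟩, hDx₁⟩
      have hEbdd : BddBelow E := ⟨δ₁, fun t ht => ht.1.1⟩
      set b := sInf E with hbdef
      have hbE : b ∈ E := hEclosed.csInf_mem hEne hEbdd
      have hb0 : 0 < b := lt_of_lt_of_le hδ₁pos hbE.1.1
      have hb1 : b < 1 := lt_of_le_of_lt hbE.1.2 hx₁.2
      have hDb : 0 ≤ D b := hbE.2
      have hDlt : ∀ t ∈ Ioo (0:ℝ) b, D t < 0 := by
        intro t ht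
        rcases lt_or_ge t δ₁ with h' | h'
        · exact hDneg0 t ⟨ht.1, lt_trans ht.2 hb1⟩ h'
        · by_contra hge
          push_neg at hge
          have htE : t ∈ E := ⟨⟨h', le_trans ht.2.le hbE.1.2⟩, hge⟩
          exact absurd (csInf_le hEbdd htE) (not_le.2 ht.2)
      have hZlt : ∀ t ∈ Ioc (0:ℝ) b, Z t < 0 := by
        intro t ht
        obtain ⟨c, hc, hceq⟩ := hmvtZ 0 t le_rfl ht.1 (le_trans ht.2 hb1.le)
        have hcoo : c ∈ Ioo (0:ℝ) 1 := ⟨hc.1, lt_of_lt_of_le hc.2 (le_trans ht.2 hb1.le)⟩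
        have hDc : D c < 0 := hDlt c ⟨hc.1, lt_of_lt_of_le hc.2 ht.2⟩
        have hZ'c : deriv u c / deriv v (y c) - 1 < 0 := (hZsgn_neg c hcoo).2 hDc
        rw [hceq, hZ0, sub_zero, sub_zero] at hZ'c
        rcases div_neg_iff.1 hZ'c with ⟨_, h'⟩ | ⟨h', _⟩
        · linarith [ht.1]
        · exact h'
      have hBfpos : ∀ t ∈ Ioo (0:ℝ) b, 0 < Bf t := by
        intro t ht
        have htoo : t ∈ Ioo (0:ℝ) 1 := ⟨ht.1, lt_trans ht.2 hb1⟩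
        have hZt : Z t < 0 := hZlt t ⟨ht.1, ht.2.le⟩
        have hyt : y t ≤ t := by
          have : Z t = y t - t := by rw [hZdef]
          linarith
        have hht : h (y t) ≤ h t :=
          hmono' (hymem t ⟨htoo.1.le, htoo.2.le⟩) ⟨htoo.1.le, htoo.2.le⟩ hyt
        have hfu : 0 < f (u t) := hfpos _ (hupos t (hsubo htoo))
        simp only [hBfdef]
        nlinarith
      obtain ⟨c, hc, hceq⟩ := hmvtD (δ₁/2) b (by linarith) (by linarith [hbE.1.1]) hb1
      have hdu : deriv u c < 0 := hu'neg c ⟨by linarith [hc.1], lt_trans hc.2 hb1⟩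
      have hBc : 0 < Bf c := hBfpos c ⟨by linarith [hc.1], hc.2⟩
      have hDδ : D (δ₁/2) < 0 := hDneg0 (δ₁/2) ⟨by linarith, by linarith⟩ (by linarith)
      have hslope : (D b - D (δ₁/2)) / (b - δ₁/2) < 0 := by
        rw [← hceq]
        exact mul_neg_of_neg_of_pos hdu hBc
      have hbpos : 0 < b - δ₁/2 := by linarith [hbE.1.1]
      rw [div_neg_iff] at hslope
      rcases hslope with ⟨_, h'⟩ | ⟨h', _⟩
      · linarith [hbpos, h']
      · linarith [hDb, hDδ, h']
    -- Z strictly decreasing, endpoint contradiction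
    have hZhalf : Z (1/2) < 0 := by
      obtain ⟨c, hc, hceq⟩ := hmvtZ 0 (1/2) le_rfl (by norm_num) (by norm_num)
      have hcoo : c ∈ Ioo (0:ℝ) 1 := ⟨hc.1, by linarith [hc.2]⟩
      have hZ'c : deriv u c / deriv v (y c) - 1 < 0 := (hZsgn_neg c hcoo).2 (hDneg c hcoo)
      rw [hceq, hZ0, sub_zero, sub_zero] at hZ'c
      rcases div_neg_iff.1 hZ'c with ⟨_, h'⟩ | ⟨h', _⟩
      · linarith
      · exact h'
    have hyhalf : (0:ℝ) ≤ y (1/2) := (hymem (1/2) (by norm_num)).1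
    have hcclo : -(1/2) ≤ Z (1/2) := by
      have : Z (1/2) = y (1/2) - 1/2 := by rw [hZdef]
      linarith
    have hkey : ∀ x ∈ Ico (1/2:ℝ) 1, v (x + Z (1/2)) ≤ u x := by
      intro x hx
      have hxm : x ∈ Icc (0:ℝ) 1 := ⟨by linarith [hx.1], hx.2.le⟩
      have hZx : Z x ≤ Z (1/2) := by
        rcases eq_or_lt_of_le hx.1 with h' | h'
        · rw [← h']
        · obtain ⟨ξ, hξ, hξeq⟩ := hmvtZ (1/2) x (by norm_num) h' hx.2.le
          have hξoo : ξ ∈ Ioo (0:ℝ) 1 := ⟨by linarith [hξ.1], lt_of_lt_of_le hξ.2 hx.2.le⟩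
          have hZ'ξ : deriv u ξ / deriv v (y ξ) - 1 < 0 := (hZsgn_neg ξ hξoo).2 (hDneg ξ hξoo)
          rw [hξeq] at hZ'ξ
          rcases div_neg_iff.1 hZ'ξ with ⟨_, h''⟩ | ⟨h'', _⟩
          · linarith
          · linarith
      have hyx : y x ≤ x + Z (1/2) := by
        have : Z x = y x - x := by rw [hZdef]
        linarith
      have hxc_mem : x + Z (1/2) ∈ Icc (0:ℝ) 1 :=
        ⟨le_trans (hymem x hxm).1 hyx, by linarith [hx.2, hZhalf]⟩
      calc v (x + Z (1/2)) ≤ v (y x) := vanti.antitoneOn (hymem x hxm) hxc_mem hyx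
        _ = u x := hvy x hxm
    have hnb : (nhdsWithin (1:ℝ) (Ico 0 1)).NeBot := by
      rw [← mem_closure_iff_nhdsWithin_neBot, closure_Ico (by norm_num : (0:ℝ) ≠ 1)]
      exact right_mem_Icc.2 zero_le_one
    have h1c : (1 + Z (1/2)) ∈ Ioo (-1:ℝ) 1 := ⟨by linarith, by linarith [hZhalf]⟩
    have htu : Tendsto u (nhdsWithin 1 (Ico 0 1)) (nhds 0) := by
      have h1m : (1:ℝ) ∈ Icc (-1:ℝ) 1 := right_mem_Icc.2 (by norm_num)
      have := (ucont 1 h1m).mono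
        (show Ico (0:ℝ) 1 ⊆ Icc (-1) 1 from fun z hz => hsub ⟨hz.1, hz.2.le⟩)
      have h2 : Tendsto u (nhdsWithin 1 (Ico 0 1)) (nhds (u 1)) := this
      rwa [hubc2] at h2
    have htv : Tendsto (fun x => v (x + Z (1/2))) (nhdsWithin 1 (Ico 0 1)) (nhds (v (1 + Z (1/2)))) := by
      have hvc : ContinuousAt v (1 + Z (1/2)) := vcont.continuousAt (Icc_mem_nhds h1c.1 h1c.2)
      have hadd : Tendsto (fun x : ℝ => x + Z (1/2)) (nhds 1) (nhds (1 + Z (1/2))) :=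
        (continuous_id.add continuous_const).tendsto 1
      exact hvc.tendsto.comp (hadd.mono_left nhdsWithin_le_nhds)
    have hev : ∀ᶠ x in nhdsWithin 1 (Ico (0:ℝ) 1), v (x + Z (1/2)) ≤ u x := by
      have h12 : ∀ᶠ x in nhds (1:ℝ), 1/2 < x := eventually_gt_nhds (by norm_num)
      filter_upwards [h12.filter_mono nhdsWithin_le_nhds, self_mem_nhdsWithin] with x h₁ h₂
      exact hkey x ⟨h₁.le, h₂.2⟩
    have hfin : v (1 + Z (1/2)) ≤ 0 := le_of_tendsto_of_tendsto htv htu hev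
    have : 0 < v (1 + Z (1/2)) := hvpos _ h1c
    linarith
  -- Part II : with lam = lam1, show v ≤ u on [0,1]
  refine ⟨heqlam, ?_⟩
  have hZle : ∀ x ∈ Icc (0:ℝ) 1, Z x ≤ 0 := by
    by_contra hcon
    push_neg at hcon
    obtain ⟨x₁, hx₁m, hx₁⟩ := hcon
    have hx₁oo : x₁ ∈ Ioo (0:ℝ) 1 := by
      constructor
      · rcases eq_or_lt_of_le hx₁m.1 with h' | h'
        · exfalso; rw [← h', hZ0] at hx₁; exact lt_irrefl _ hx₁
        · exact h'
      · rcases eq_or_lt_of_le hx₁m.2 with h' | h'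
        · exfalso; rw [h', hZ1] at hx₁; exact lt_irrefl _ hx₁
        · exact h'
    set A := Icc 0 x₁ ∩ Z ⁻¹' (Iic 0) with hAdef
    have hAclosed : IsClosed A :=
      (hZcont.mono (Icc_subset_Icc le_rfl hx₁oo.2.le)).preimage_isClosed_of_isClosed
        isClosed_Icc isClosed_Iic
    have hA0 : (0:ℝ) ∈ A := ⟨left_mem_Icc.2 hx₁oo.1.le, by simp [mem_preimage, hZ0]⟩
    have hAbdd : BddAbove A := ⟨x₁, fun t ht => ht.1.2⟩
    set a := sSup A with hadef
    have haA : a ∈ A := hAclosed.csSup_mem ⟨0, hA0⟩ hAbdd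
    have haZ : Z a ≤ 0 := haA.2
    have ha0 : 0 ≤ a := haA.1.1
    have hax₁ : a < x₁ := by
      rcases eq_or_lt_of_le haA.1.2 with h' | h'
      · exfalso; rw [h'] at haZ; linarith
      · exact h'
    have hZpos1 : ∀ t ∈ Ioc a x₁, 0 < Z t := by
      intro t ht
      by_contra hle'
      push_neg at hle'
      have : t ∈ A := ⟨⟨le_trans ha0 ht.1.le, ht.2⟩, hle'⟩
      exact absurd (le_csSup hAbdd this) (not_le.2 ht.1)
    set Bs := Icc x₁ 1 ∩ Z ⁻¹' (Iic 0) with hBsdef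
    have hBsclosed : IsClosed Bs :=
      (hZcont.mono (Icc_subset_Icc hx₁oo.1.le le_rfl)).preimage_isClosed_of_isClosed
        isClosed_Icc isClosed_Iic
    have hBs1 : (1:ℝ) ∈ Bs := ⟨right_mem_Icc.2 hx₁oo.2.le, by simp [mem_preimage, hZ1]⟩
    have hBsbdd : BddBelow Bs := ⟨x₁, fun t ht => ht.1.1⟩
    set b := sInf Bs with hbdef
    have hbBs : b ∈ Bs := hBsclosed.csInf_mem ⟨1, hBs1⟩ hBsbdd
    have hbZ : Z b ≤ 0 := hbBs.2
    have hb1 : b ≤ 1 := hbBs.1.2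
    have hx₁b : x₁ < b := by
      rcases eq_or_lt_of_le hbBs.1.1 with h' | h'
      · exfalso; rw [← h'] at hbZ; linarith
      · exact h'
    have hZpos2 : ∀ t ∈ Ico x₁ b, 0 < Z t := by
      intro t ht
      by_contra hle'
      push_neg at hle'
      have : t ∈ Bs := ⟨⟨ht.1, le_trans ht.2.le hb1⟩, hle'⟩
      exact absurd (csInf_le hBsbdd this) (not_le.2 ht.2)
    have hZpos : ∀ t ∈ Ioo a b, 0 < Z t := by
      intro t ht
      rcases le_or_gt t x₁ with h' | h'
      · exact hZpos1 t ⟨ht.1, h'⟩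
      · exact hZpos2 t ⟨h'.le, ht.2⟩
    -- MVT Z on [a, x₁] : find ξ with D ξ > 0
    obtain ⟨ξ, hξ, hξeq⟩ := hmvtZ a x₁ ha0 hax₁ hx₁oo.2.le
    have hξoo : ξ ∈ Ioo (0:ℝ) 1 := ⟨lt_of_le_of_lt ha0 hξ.1, lt_trans hξ.2 hx₁oo.2⟩
    have hslope1 : 0 < (Z x₁ - Z a) / (x₁ - a) := div_pos (by linarith) (by linarith)
    have hDξ : 0 < D ξ := (hZsgn_pos ξ hξoo).1 (by rw [hξeq]; exact hslope1)
    have hξb : ξ < b := lt_trans hξ.2 hx₁b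
    -- MVT Z on [ξ, b] : find η with D η < 0
    obtain ⟨η, hη, hηeq⟩ := hmvtZ ξ b hξoo.1.le hξb hb1
    have hZξ : 0 < Z ξ := hZpos ξ ⟨hξ.1, hξb⟩
    have hslope2 : (Z b - Z ξ) / (b - ξ) < 0 :=
      div_neg_of_neg_of_pos (by linarith) (by linarith)
    have hηoo : η ∈ Ioo (0:ℝ) 1 := ⟨lt_trans hξoo.1 hη.1, lt_of_lt_of_le hη.2 hb1⟩
    have hDη : D η < 0 := (hZsgn_neg η hηoo).1 (by rw [hηeq]; exact hslope2)
    -- MVT D on [ξ, η]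
    obtain ⟨ζ, hζ, hζeq⟩ := hmvtD ξ η hξoo.1.le hη.1 hηoo.2
    have hζoo : ζ ∈ Ioo (0:ℝ) 1 := ⟨lt_trans hξoo.1 hζ.1, lt_trans hζ.2 hηoo.2⟩
    have hζab : ζ ∈ Ioo a b := ⟨lt_trans hξ.1 hζ.1, lt_trans hζ.2 hη.2⟩
    have hZζ : 0 < Z ζ := hZpos ζ hζab
    have hyζ : ζ ≤ y ζ := by
      have : Z ζ = y ζ - ζ := by rw [hZdef]
      linarith
    have hζm : ζ ∈ Icc (0:ℝ) 1 := ⟨hζoo.1.le, hζoo.2.le⟩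
    have hhζ : h ζ ≤ h (y ζ) := hmono' hζm (hymem ζ hζm) hyζ
    have hdu : deriv u ζ < 0 := hu'neg ζ hζoo
    have hBfζ : Bf ζ ≤ 0 := by
      simp only [hBfdef]
      rw [← heqlam]
      nlinarith
    have hge : 0 ≤ deriv u ζ * Bf ζ := by nlinarith [hdu.le, hBfζ]
    have hslope3 : (D η - D ξ) / (η - ξ) < 0 :=
      div_neg_of_neg_of_pos (by linarith) (by linarith [hη.1, hζ.1, hζ.2])
    rw [hζeq] at hge
    linarith
  intro x hx
  have hZx := hZle x hx
  have hyx : y x ≤ x := by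
    have : Z x = y x - x := by rw [hZdef]
    linarith
  calc v x ≤ v (y x) := vanti.antitoneOn (hymem x hx) hx hyx
    _ = u x := hvy x hx

theorem max_value_global_parameter_in_lambda
    (lam lam1 : ℝ) (f h u v : ℝ → ℝ)
    (hlam : 0 < lam) (hlam1 : 0 < lam1)
    (hf : Continuous f) (hfpos : ∀ s : ℝ, 0 < s → 0 < f s)
    (hh1 : ContinuousOn h (Icc (-1) 1))
    (hh2 : ContDiffOn ℝ 1 h (Ioo (-1) 1))
    (hheven : ∀ x ∈ Ioo (0:ℝ) 1, h (-x) = h x)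
    (hh0 : 0 < h 0)
    (hhmono : ∀ x ∈ Ioo (-1:ℝ) 1, 0 ≤ x * deriv h x)
    (hu : ContDiffOn ℝ 2 u (Icc (-1) 1))
    (hupos : ∀ x ∈ Ioo (-1:ℝ) 1, 0 < u x)
    (hueq : ∀ x ∈ Ioo (-1:ℝ) 1, deriv (deriv u) x + lam * f (u x) - h x = 0)
    (hubc1 : u (-1) = 0) (hubc2 : u 1 = 0)
    (hueven : ∀ x ∈ Icc (-1:ℝ) 1, u (-x) = u x)
    (hudec : ∀ x ∈ Ioc (0:ℝ) 1, deriv u x < 0)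
    (hv : ContDiffOn ℝ 2 v (Icc (-1) 1))
    (hvpos : ∀ x ∈ Ioo (-1:ℝ) 1, 0 < v x)
    (hveq : ∀ x ∈ Ioo (-1:ℝ) 1, deriv (deriv v) x + lam1 * f (v x) - h x = 0)
    (hvbc1 : v (-1) = 0) (hvbc2 : v 1 = 0)
    (hveven : ∀ x ∈ Icc (-1:ℝ) 1, v (-x) = v x)
    (hvdec : ∀ x ∈ Ioc (0:ℝ) 1, deriv v x < 0)
    (hmax : u 0 = v 0) :
    lam = lam1 ∧ EqOn u v (Icc (-1) 1) := by
  rcases le_total lam lam1 with hle | hle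
  · obtain ⟨heq, hvu⟩ := key_lemma lam lam1 f h u v hlam hlam1 hf hfpos hh1 hh2 hhmono
      hu hupos hueq hubc2 hueven hudec hv hvpos hveq hvbc2 hveven hvdec hmax hle
    obtain ⟨_, huv⟩ := key_lemma lam1 lam f h v u hlam1 hlam hf hfpos hh1 hh2 hhmono
      hv hvpos hveq hvbc2 hveven hvdec hu hupos hueq hubc2 hueven hudec hmax.symm heq.ge
    refine ⟨heq, ?_⟩
    have h01 : ∀ x ∈ Icc (0:ℝ) 1, u x = v x :=
      fun x hx => le_antisymm (huv x hx) (hvu x hx)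
    intro x hx
    rcases le_or_gt 0 x with hx0 | hx0
    · exact h01 x ⟨hx0, hx.2⟩
    · have hmx : -x ∈ Icc (-1:ℝ) 1 := ⟨by linarith [hx.2], by linarith [hx.1]⟩
      have h1 : u (-(-x)) = u (-x) := hueven (-x) hmx
      have h2 : v (-(-x)) = v (-x) := hveven (-x) hmx
      rw [neg_neg] at h1 h2
      rw [h1, h2]
      exact h01 (-x) ⟨by linarith, by linarith [hx.1]⟩
  · obtain ⟨heq, huv⟩ := key_lemma lam1 lam f h v u hlam1 hlam hf hfpos hh1 hh2 hhmono
      hv hvpos hveq hvbc2 hveven hvdec hu hupos hueq hubc2 hueven hudec hmax.symm hle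
    obtain ⟨_, hvu⟩ := key_lemma lam lam1 f h u v hlam hlam1 hf hfpos hh1 hh2 hhmono
      hu hupos hueq hubc2 hueven hudec hv hvpos hveq hvbc2 hveven hvdec hmax heq.ge
    refine ⟨heq.symm, ?_⟩
    have h01 : ∀ x ∈ Icc (0:ℝ) 1, u x = v x :=
      fun x hx => le_antisymm (huv x hx) (hvu x hx)
    intro x hx
    rcases le_or_gt 0 x with hx0 | hx0
    · exact h01 x ⟨hx0, hx.2⟩
    · have hmx : -x ∈ Icc (-1:ℝ) 1 := ⟨by linarith [hx.2], by linarith [hx.1]⟩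
      have h1 : u (-(-x)) = u (-x) := hueven (-x) hmx
      have h2 : v (-(-x)) = v (-x) := hveven (-x) hmx
      rw [neg_neg] at h1 h2
      rw [h1, h2]
      exact h01 (-x) ⟨by linarith, by linarith [hx.1]⟩
end

section
/- Let u be a positive solution of u'' + λ f(u) - μ g(x) = 0 on (-1,1) with u(±1) = 0, and let w be a nontrivial solution of the linearized problem w'' + λ f'(u(x)) w = 0, w(-1) = w(1) = 0. Then w is of one sign: after possibly replacing w by -w, w(x) > 0 for all x ∈ (-1,1). -/
open Set Real Filter Topology

set_option maxHeartbeats 1000000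

private lemma c2_hasDerivAt {w : ℝ → ℝ} (hw : ContDiffOn ℝ 2 w (Icc (-1) 1))
    {x : ℝ} (hx : x ∈ Ioo (-1:ℝ) 1) :
    HasDerivAt w (deriv w x) x ∧ HasDerivAt (deriv w) (deriv (deriv w) x) x := by
  have hmem : Icc (-1:ℝ) 1 ∈ 𝓝 x := Icc_mem_nhds hx.1 hx.2
  have h2 : ContDiffAt ℝ 2 w x := hw.contDiffAt hmem
  obtain ⟨s, hs, hws⟩ := h2.contDiffOn le_rfl (by simp)
  obtain ⟨t, hts, hto, hxt⟩ := mem_nhds_iff.1 hs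
  have hd1 : DifferentiableAt ℝ w x := h2.differentiableAt (by norm_num)
  have hD : ContDiffOn ℝ 1 (deriv w) t :=
    (hws.mono hts).deriv_of_isOpen hto (by norm_num)
  have hd2 : DifferentiableAt ℝ (deriv w) x :=
    (hD.differentiableOn one_ne_zero).differentiableAt (hto.mem_nhds hxt)
  exact ⟨hd1.hasDerivAt, hd2.hasDerivAt⟩

private lemma gronwall_zero (y d A : ℝ → ℝ) (s t K : ℝ) (hK : 0 ≤ K)
    (hy : ∀ x ∈ Icc s t, HasDerivAt y (d x) x)
    (hd : ∀ x ∈ Icc s t, HasDerivAt d (A x) x)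
    (hA : ∀ x ∈ Icc s t, |A x| ≤ K * |y x|)
    (hys : y s = 0) (hds : d s = 0) :
    ∀ x ∈ Icc s t, y x = 0 := by
  set F : ℝ → ℝ × ℝ := fun x => (y x, d x) with hFdef
  have hcont : ContinuousOn F (Icc s t) := fun x hx =>
    (((hy x hx).continuousAt).prodMk ((hd x hx).continuousAt)).continuousWithinAt
  have hder : ∀ x ∈ Ico s t, HasDerivWithinAt F (d x, A x) (Ici x) x := fun x hx =>
    (((hy x (Ico_subset_Icc_self hx)).prodMk (hd x (Ico_subset_Icc_self hx)))).hasDerivWithinAt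
  have hbound : ∀ x ∈ Ico s t, ‖(d x, A x)‖ ≤ (max 1 K) * ‖F x‖ + 0 := by
    intro x hx
    have hx' := Ico_subset_Icc_self hx
    have hAx := hA x hx'
    rw [Prod.norm_def, Prod.norm_def]
    simp only [Real.norm_eq_abs, add_zero]
    have h1 : |d x| ≤ max 1 K * max |y x| |d x| := by
      nlinarith [le_max_right |y x| |d x|, le_max_left (1:ℝ) K, abs_nonneg (d x),
        abs_nonneg (y x), le_max_left |y x| |d x|]
    have h2 : |A x| ≤ max 1 K * max |y x| |d x| := by
      have hKK : K ≤ max 1 K := le_max_right 1 K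
      have hyd : |y x| ≤ max |y x| |d x| := le_max_left _ _
      nlinarith [abs_nonneg (y x), abs_nonneg (d x), abs_nonneg (A x)]
    exact max_le h1 h2
  have hstart : ‖F s‖ ≤ 0 := by
    simp [hFdef, hys, hds, Prod.norm_def]
  have hmain := norm_le_gronwallBound_of_norm_deriv_right_le hcont hder hstart hbound
  intro x hx
  have h := hmain x hx
  rw [gronwallBound_ε0_δ0] at h
  have hF0 : F x = 0 := norm_le_zero_iff.1 h
  have := congrArg Prod.fst hF0
  simpa [hFdef] using this

theorem linearized_solution_one_sign
    (lam mu : ℝ) (f g u w : ℝ → ℝ)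
    (hlam : 0 < lam) (hmu : 0 < mu)
    (hf : ContDiff ℝ 1 f)
    (hg1 : ContinuousOn g (Icc (-1) 1))
    (hg2 : ContDiffOn ℝ 1 g (Ioo (-1) 1))
    (hgeven : ∀ x ∈ Ioo (-1:ℝ) 1, g (-x) = g x)
    (hg0 : 0 < g 0)
    (hgmono : ∀ x ∈ Ioo (-1:ℝ) 1, 0 ≤ x * deriv g x)
    (hu : ContDiffOn ℝ 2 u (Icc (-1) 1))
    (hupos : ∀ x ∈ Ioo (-1:ℝ) 1, 0 < u x)
    (hueq : ∀ x ∈ Ioo (-1:ℝ) 1, deriv (deriv u) x + lam * f (u x) - mu * g x = 0)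
    (hubc1 : u (-1) = 0) (hubc2 : u 1 = 0)
    (hueven : ∀ x ∈ Icc (-1:ℝ) 1, u (-x) = u x)
    (hudec : ∀ x ∈ Ioc (0:ℝ) 1, deriv u x < 0)
    (hw : ContDiffOn ℝ 2 w (Icc (-1) 1))
    (hweq : ∀ x ∈ Ioo (-1:ℝ) 1, deriv (deriv w) x + lam * deriv f (u x) * w x = 0)
    (hwbc1 : w (-1) = 0) (hwbc2 : w 1 = 0)
    (hweven : ∀ x ∈ Icc (-1:ℝ) 1, w (-x) = w x)
    (hw0 : deriv w 0 = 0)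
    (hwnontriv : ∃ x ∈ Ioo (-1:ℝ) 1, w x ≠ 0) :
    (∀ x ∈ Ioo (-1:ℝ) 1, 0 < w x) ∨ (∀ x ∈ Ioo (-1:ℝ) 1, w x < 0) := by
  -- a bound for the potential
  obtain ⟨M0, hM0⟩ := isCompact_Icc.exists_bound_of_continuousOn
    ((hf.continuous_deriv le_rfl).comp_continuousOn hu.continuousOn)
  set M := max M0 0 with hMdef
  have hM : ∀ x ∈ Icc (-1:ℝ) 1, |deriv f (u x)| ≤ M := fun x hx =>
    le_trans (by simpa using hM0 x hx) (le_max_left _ _)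
  have hMnn : (0:ℝ) ≤ M := le_max_right _ _
  -- derivatives of u
  have hud : ∀ x ∈ Ioo (-1:ℝ) 1,
      HasDerivAt u (deriv u x) x ∧ HasDerivAt (deriv u) (deriv (deriv u) x) x :=
    fun x hx => c2_hasDerivAt hu hx
  have hu3 : ∀ x ∈ Ioo (-1:ℝ) 1, HasDerivAt (deriv (deriv u))
      (mu * deriv g x - lam * (deriv f (u x) * deriv u x)) x := by
    intro x hx
    have hgd : HasDerivAt g (deriv g x) x :=
      ((hg2.differentiableOn one_ne_zero).differentiableAt (isOpen_Ioo.mem_nhds hx)).hasDerivAt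
    have hfd : HasDerivAt f (deriv f (u x)) (u x) := ((hf.differentiable one_ne_zero) (u x)).hasDerivAt
    have hfu : HasDerivAt (fun y => f (u y)) (deriv f (u x) * deriv u x) x :=
      hfd.comp x (hud x hx).1
    have hrhs : HasDerivAt (fun y => mu * g y - lam * f (u y))
        (mu * deriv g x - lam * (deriv f (u x) * deriv u x)) x :=
      (hgd.const_mul mu).sub (hfu.const_mul lam)
    refine hrhs.congr_of_eventuallyEq ?_
    filter_upwards [isOpen_Ioo.mem_nhds hx] with y hy
    have := hueq y hy; linarith
  -- the within-derivative of u, continuous up to the boundary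
  have hIcc : UniqueDiffOn ℝ (Icc (-1:ℝ) 1) := uniqueDiffOn_Icc (by norm_num)
  set Q := derivWithin u (Icc (-1:ℝ) 1) with hQdef
  have hQcont : ContinuousOn Q (Icc (-1) 1) := hu.continuousOn_derivWithin hIcc (by norm_num)
  have hQeq : ∀ x ∈ Ioo (-1:ℝ) 1, Q x = deriv u x := fun x hx =>
    derivWithin_of_mem_nhds (Icc_mem_nhds hx.1 hx.2)
  have hu1diff : DifferentiableAt ℝ u 1 := by
    by_contra h
    have h0 := hudec 1 ⟨by norm_num, le_rfl⟩
    rw [deriv_zero_of_not_differentiableAt h] at h0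
    exact absurd h0 (by norm_num)
  have hQ1 : Q 1 = deriv u 1 := hu1diff.derivWithin (hIcc 1 ⟨by norm_num, le_rfl⟩)
  have hQneg : ∀ x ∈ Ioc (0:ℝ) 1, Q x < 0 := by
    intro x hx
    rcases eq_or_lt_of_le hx.2 with h1 | h1
    · rw [h1, hQ1]; exact hudec 1 ⟨by norm_num, le_rfl⟩
    · rw [hQeq x ⟨by linarith [hx.1], h1⟩]; exact hudec x ⟨hx.1, h1.le⟩
  -- key claim
  have key : ∀ v : ℝ → ℝ, ContDiffOn ℝ 2 v (Icc (-1) 1) →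
      (∀ x ∈ Ioo (-1:ℝ) 1, deriv (deriv v) x + lam * deriv f (u x) * v x = 0) →
      v 1 = 0 → 0 < v 0 → ∀ x ∈ Ico (0:ℝ) 1, 0 < v x := by
    intro v hv hveq hv1 hv0
    have hvd : ∀ x ∈ Ioo (-1:ℝ) 1,
        HasDerivAt v (deriv v x) x ∧ HasDerivAt (deriv v) (deriv (deriv v) x) x :=
      fun x hx => c2_hasDerivAt hv hx
    have hv2 : ∀ x ∈ Ioo (-1:ℝ) 1, deriv (deriv v) x = -(lam * deriv f (u x)) * v x := by
      intro x hx; have := hveq x hx; linarith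
    have hvc : ContinuousOn v (Icc (-1:ℝ) 1) := hv.continuousOn
    set Z := {x : ℝ | x ∈ Icc (0:ℝ) 1 ∧ v x = 0} with hZdef
    have hZc : IsClosed Z := by
      have hZeq : Z = Icc (0:ℝ) 1 ∩ v ⁻¹' {0} := by ext z; simp [hZdef]
      rw [hZeq]
      exact (hvc.mono (Icc_subset_Icc (by norm_num) le_rfl)).preimage_isClosed_of_isClosed
        isClosed_Icc isClosed_singleton
    have h1Z : (1:ℝ) ∈ Z := ⟨⟨by norm_num, le_rfl⟩, hv1⟩
    have hZne : Z.Nonempty := ⟨1, h1Z⟩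
    have hZbdd : BddBelow Z := ⟨0, fun x hx => hx.1.1⟩
    set b := sInf Z with hbdef
    have hbZ : b ∈ Z := hZc.csInf_mem hZne hZbdd
    have hvb : v b = 0 := hbZ.2
    have hb0 : 0 < b := by
      rcases lt_or_eq_of_le hbZ.1.1 with h | h
      · exact h
      · exfalso; rw [← h] at hvb; linarith
    have hb1 : b ≤ 1 := hbZ.1.2
    have hblow : ∀ x ∈ Z, b ≤ x := fun x hx => csInf_le hZbdd hx
    have hpos : ∀ x, 0 ≤ x → x < b → 0 < v x := by
      intro x hx0 hxb
      by_contra hle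
      push_neg at hle
      have hsub : Icc (0:ℝ) x ⊆ Icc (-1:ℝ) 1 := Icc_subset_Icc (by norm_num) (by linarith)
      have hiv := intermediate_value_Icc' hx0 (hvc.mono hsub)
      have h0m : (0:ℝ) ∈ Icc (v x) (v 0) := ⟨hle, hv0.le⟩
      obtain ⟨z, hz, hz0⟩ := hiv h0m
      have hzZ : z ∈ Z := ⟨⟨hz.1, by linarith [hz.2]⟩, hz0⟩
      have := hblow z hzZ
      linarith [hz.2]
    rcases eq_or_lt_of_le hb1 with hb1' | hb1'
    · intro x hx
      exact hpos x hx.1 (by rw [hb1']; exact hx.2)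
    exfalso
    have hbI : b ∈ Ioo (-1:ℝ) 1 := ⟨by linarith, hb1'⟩
    have hdvb := (hvd b hbI).1
    have hslope : Tendsto (slope v b) (𝓝[≠] b) (𝓝 (deriv v b)) :=
      hasDerivAt_iff_tendsto_slope.1 hdvb
    have hdvb_le : deriv v b ≤ 0 := by
      by_contra hpos'
      push_neg at hpos'
      have h2 : Tendsto (slope v b) (𝓝[<] b) (𝓝 (deriv v b)) :=
        hslope.mono_left (nhdsWithin_mono b fun y hy => ne_of_lt hy)
      have hev : ∀ᶠ x in 𝓝[<] b, 0 < slope v b x := h2.eventually (lt_mem_nhds hpos')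
      have hmem : ∀ᶠ x in 𝓝[<] b, x ∈ Ioo 0 b := Ioo_mem_nhdsLT_of_mem ⟨hb0, le_rfl⟩
      obtain ⟨x, hx1, hx2⟩ := (hev.and hmem).exists
      rw [slope_def_field, hvb, sub_zero] at hx1
      have hvx := hpos x hx2.1.le hx2.2
      have : v x / (x - b) < 0 := div_neg_of_pos_of_neg hvx (by linarith [hx2.2])
      linarith
    have hdvb_ne : deriv v b ≠ 0 := by
      intro hdb0
      have hmemIoo : ∀ x ∈ Icc b (2*b), 2*b - x ∈ Ioo (-1:ℝ) 1 := by
        intro x hx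
        constructor
        · have := hx.2; linarith
        · have := hx.1; linarith
      have hinner : ∀ x : ℝ, HasDerivAt (fun t : ℝ => 2*b - t) (-1) x := by
        intro x
        simpa using (hasDerivAt_id x).const_sub (2*b)
      have h1 : ∀ x ∈ Icc b (2*b), HasDerivAt (fun t => v (2*b - t)) (-(deriv v (2*b - x))) x := by
        intro x hx
        have h := ((hvd _ (hmemIoo x hx)).1).comp x (hinner x)
        simpa [Function.comp_def, mul_comm] using h
      have h2 : ∀ x ∈ Icc b (2*b),
          HasDerivAt (fun t => -(deriv v (2*b - t)))
            (-(lam * deriv f (u (2*b - x))) * v (2*b - x)) x := by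
        intro x hx
        have h := (((hvd _ (hmemIoo x hx)).2).comp x (hinner x)).neg
        have heq : -(deriv (deriv v) (2*b - x) * (-1)) = -(lam * deriv f (u (2*b - x))) * v (2*b - x) := by
          rw [hv2 _ (hmemIoo x hx)]; ring
        rw [heq] at h
        simpa [Function.comp_def, Pi.neg_def] using h
      have h3 : ∀ x ∈ Icc b (2*b),
          |(-(lam * deriv f (u (2*b - x))) * v (2*b - x))| ≤ (lam * M) * |v (2*b - x)| := by
        intro x hx
        have hm := hM (2*b - x) (Ioo_subset_Icc_self (hmemIoo x hx))
        rw [abs_mul, abs_neg, abs_mul, abs_of_pos hlam]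
        have h1' : lam * |deriv f (u (2*b - x))| ≤ lam * M :=
          mul_le_mul_of_nonneg_left hm hlam.le
        exact mul_le_mul_of_nonneg_right h1' (abs_nonneg _)
      have hzero := gronwall_zero (fun t => v (2*b - t)) (fun t => -(deriv v (2*b - t)))
        (fun t => -(lam * deriv f (u (2*b - t))) * v (2*b - t)) b (2*b) (lam * M)
        (by positivity) h1 h2 h3
        (by show v (2*b - b) = 0; rw [show 2*b - b = b by ring]; exact hvb)
        (by show -(deriv v (2*b - b)) = 0; rw [show 2*b - b = b by ring, hdb0, neg_zero])
      have hfin := hzero (2*b) ⟨by linarith, le_rfl⟩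
      simp only [show 2*b - 2*b = 0 by ring] at hfin
      linarith
    have hdvb_neg : deriv v b < 0 := lt_of_le_of_ne hdvb_le hdvb_ne
    -- find a point just right of b where v is negative
    have h2' : Tendsto (slope v b) (𝓝[>] b) (𝓝 (deriv v b)) :=
      hslope.mono_left (nhdsWithin_mono b fun y hy => ne_of_gt hy)
    have hev : ∀ᶠ x in 𝓝[>] b, slope v b x < 0 := h2'.eventually (gt_mem_nhds hdvb_neg)
    have hmem1 : ∀ᶠ x in 𝓝[>] b, x ∈ Ioo b 1 := Ioo_mem_nhdsGT_of_mem ⟨le_rfl, hb1'⟩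
    obtain ⟨c, hc, hcsub⟩ := mem_nhdsGT_iff_exists_Ioo_subset.1 (hev.and hmem1)
    have hneg : ∀ x ∈ Ioo b c, v x < 0 := by
      intro x hx
      obtain ⟨hs, hx1⟩ := hcsub hx
      rw [slope_def_field, hvb, sub_zero] at hs
      by_contra hge
      push_neg at hge
      have : 0 ≤ v x / (x - b) := div_nonneg hge (by linarith [hx.1])
      linarith
    set c' := min c 1 with hc'def
    have hbc' : b < c' := lt_min hc hb1'
    set b' := (b + c')/2 with hb'def
    have hb'1 : b < b' := by rw [hb'def]; linarith
    have hb'2 : b' < c' := by rw [hb'def]; linarith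
    have hb'c : b' < c := lt_of_lt_of_le hb'2 (min_le_left _ _)
    have hb'lt1 : b' < 1 := lt_of_lt_of_le hb'2 (min_le_right _ _)
    have hvb' : v b' < 0 := hneg b' ⟨hb'1, hb'c⟩
    set Z2 := {x : ℝ | x ∈ Icc b' 1 ∧ v x = 0} with hZ2def
    have hZ2c : IsClosed Z2 := by
      have hZeq : Z2 = Icc b' 1 ∩ v ⁻¹' {0} := by ext z; simp [hZ2def]
      rw [hZeq]
      exact (hvc.mono (Icc_subset_Icc (by linarith [hb0]) le_rfl)).preimage_isClosed_of_isClosed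
        isClosed_Icc isClosed_singleton
    have h1Z2 : (1:ℝ) ∈ Z2 := ⟨⟨hb'lt1.le, le_rfl⟩, hv1⟩
    set β := sInf Z2 with hβdef
    have hβZ : β ∈ Z2 := hZ2c.csInf_mem ⟨1, h1Z2⟩ ⟨b', fun x hx => hx.1.1⟩
    have hvβ : v β = 0 := hβZ.2
    have hβlow : ∀ x ∈ Z2, β ≤ x := fun x hx => csInf_le ⟨b', fun z hz => hz.1.1⟩ hx
    have hβb' : b' < β := by
      rcases lt_or_eq_of_le hβZ.1.1 with h | h
      · exact h
      · exfalso; rw [← h] at hvβ; linarith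
    have hβ1 : β ≤ 1 := hβZ.1.2
    have hβb : b < β := lt_trans hb'1 hβb'
    have hvneg : ∀ x, b < x → x < β → v x < 0 := by
      intro x hxb hxβ
      rcases le_or_gt x b' with h | h
      · exact hneg x ⟨hxb, lt_of_le_of_lt h hb'c⟩
      · by_contra hge
        push_neg at hge
        rcases eq_or_lt_of_le hge with heq | hlt
        · exact absurd (hβlow x ⟨⟨h.le, by linarith⟩, heq.symm⟩) (by linarith)
        · have hsub : Icc b' x ⊆ Icc (-1:ℝ) 1 := Icc_subset_Icc (by linarith [hb0]) (by linarith)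
          obtain ⟨z, hz, hz0⟩ := intermediate_value_Icc h.le (hvc.mono hsub) ⟨hvb'.le, hlt.le⟩
          have := hβlow z ⟨⟨hz.1, by linarith [hz.2]⟩, hz0⟩
          linarith [hz.2]
    -- the Wronskian-type function
    set W := fun x => v x * deriv (deriv u) x - deriv v x * deriv u x with hWdef
    have hW : ∀ x ∈ Ioo (0:ℝ) 1, HasDerivAt W (mu * deriv g x * v x) x := by
      intro x hx
      have hxI : x ∈ Ioo (-1:ℝ) 1 := ⟨by linarith [hx.1], hx.2⟩
      have h1 := (hvd x hxI).1
      have h2 := (hvd x hxI).2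
      have h3 := (hud x hxI).1
      have h4 := (hud x hxI).2
      have h5 := hu3 x hxI
      have hh := (h1.mul h5).sub (h2.mul h4)
      have heq : deriv v x * (deriv (deriv u) x) + v x * (mu * deriv g x - lam * (deriv f (u x) * deriv u x))
          - (deriv (deriv v) x * deriv u x + deriv v x * deriv (deriv u) x) = mu * deriv g x * v x := by
        rw [hv2 x hxI]; ring
      rw [heq] at hh
      exact hh
    have hWb : W b < 0 := by
      have hdub := hudec b ⟨hb0, hb1⟩
      have : W b = - (deriv v b * deriv u b) := by simp only [hWdef, hvb]; ring
      rw [this]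
      nlinarith
    have hWmono : ∀ x ∈ Ioo b β, W x ≤ W b := by
      intro x hx
      have hsub : Icc b x ⊆ Ioo (0:ℝ) 1 := fun z hz =>
        ⟨lt_of_lt_of_le hb0 hz.1, by linarith [hz.2, hx.2, hβ1]⟩
      have hcontW : ContinuousOn W (Icc b x) := fun z hz =>
        (hW z (hsub hz)).continuousAt.continuousWithinAt
      have hdiffW : DifferentiableOn ℝ W (interior (Icc b x)) := fun z hz =>
        (hW z (hsub (interior_subset hz))).differentiableAt.differentiableWithinAt
      have hderivW : ∀ z ∈ interior (Icc b x), deriv W z ≤ 0 := by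
        intro z hz
        rw [interior_Icc] at hz
        have hzI : z ∈ Ioo (0:ℝ) 1 := hsub (Ioo_subset_Icc_self hz)
        rw [(hW z hzI).deriv]
        have hg' : 0 ≤ deriv g z := by
          have hmz := hgmono z ⟨by linarith [hzI.1], hzI.2⟩
          by_contra hcon
          push_neg at hcon
          nlinarith [hzI.1]
        have hvz : v z < 0 := hvneg z hz.1 (by linarith [hz.2, hx.2])
        have := mul_nonneg hmu.le hg'
        nlinarith
      have hanti := antitoneOn_of_deriv_nonpos (convex_Icc b x) hcontW hdiffW hderivW
      exact hanti (left_mem_Icc.2 hx.1.le) (right_mem_Icc.2 hx.1.le) hx.1.le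
    -- the ratio function
    set h := fun x => v x / Q x with hhdef
    have hsubIcc : Icc b β ⊆ Icc (-1:ℝ) 1 := Icc_subset_Icc (by linarith) hβ1
    have hQneg' : ∀ x ∈ Icc b β, Q x < 0 := fun x hx =>
      hQneg x ⟨lt_of_lt_of_le hb0 hx.1, le_trans hx.2 hβ1⟩
    have hconth : ContinuousOn h (Icc b β) :=
      (hvc.mono hsubIcc).div (hQcont.mono hsubIcc) (fun x hx => (hQneg' x hx).ne)
    have hmono : StrictMonoOn h (Icc b β) := by
      apply strictMonoOn_of_deriv_pos (convex_Icc b β) hconth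
      intro x hx
      rw [interior_Icc] at hx
      have hxI : x ∈ Ioo (-1:ℝ) 1 := ⟨by linarith [hx.1], lt_of_lt_of_le hx.2 hβ1⟩
      have hqx : deriv u x < 0 := hudec x ⟨by linarith [hx.1], (lt_of_lt_of_le hx.2 hβ1).le⟩
      have hdiv : HasDerivAt (fun y => v y / deriv u y)
          ((deriv v x * deriv u x - v x * deriv (deriv u) x) / (deriv u x)^2) x :=
        (hvd x hxI).1.div (hud x hxI).2 hqx.ne
      have heqf : h =ᶠ[𝓝 x] fun y => v y / deriv u y := by
        filter_upwards [isOpen_Ioo.mem_nhds hxI] with y hy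
        show v y / Q y = v y / deriv u y
        rw [hQeq y hy]
      have hd : HasDerivAt h ((deriv v x * deriv u x - v x * deriv (deriv u) x) / (deriv u x)^2) x :=
        hdiv.congr_of_eventuallyEq heqf
      rw [hd.deriv]
      have hWx : W x ≤ W b := hWmono x hx
      have hWexp : W x = v x * deriv (deriv u) x - deriv v x * deriv u x := by simp only [hWdef]
      have hnum : 0 < deriv v x * deriv u x - v x * deriv (deriv u) x := by linarith
      have hden : 0 < (deriv u x)^2 := by nlinarith
      exact div_pos hnum hden
    have hfin := hmono ⟨le_rfl, hβb.le⟩ ⟨hβb.le, le_rfl⟩ hβb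
    have hhb : h b = 0 := by show v b / Q b = 0; rw [hvb, zero_div]
    have hhβ : h β = 0 := by show v β / Q β = 0; rw [hvβ, zero_div]
    rw [hhb, hhβ] at hfin
    exact lt_irrefl 0 hfin
  -- conclude by a case analysis on the sign of w 0
  rcases lt_trichotomy (w 0) 0 with hneg0 | hzero0 | hpos0
  · right
    have hnegeq : ∀ x ∈ Ioo (-1:ℝ) 1,
        deriv (deriv (fun y => -w y)) x + lam * deriv f (u x) * (-w x) = 0 := by
      intro x hx
      have hD1 : (deriv fun y => -w y) = fun y => -(deriv w y) := funext fun y => deriv.neg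
      rw [hD1]
      have hD2 : deriv (fun y => -(deriv w y)) x = -(deriv (deriv w) x) := deriv.neg
      rw [hD2]
      have := hweq x hx
      ring_nf
      ring_nf at this
      linarith
    have hkey := key (fun x => -w x) hw.neg hnegeq (by simp [hwbc2]) (by simpa using hneg0)
    intro x hx
    rcases le_or_gt 0 x with h0 | h0
    · have := hkey x ⟨h0, hx.2⟩; simpa using this
    · have hmx : -x ∈ Ico (0:ℝ) 1 := ⟨by linarith, by linarith [hx.1]⟩
      have heqw : w x = w (-x) := by
        have := hweven (-x) ⟨by linarith [hx.2], by linarith [hx.1]⟩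
        simpa using this
      have := hkey (-x) hmx
      rw [heqw]
      simpa using this
  · exfalso
    obtain ⟨x0, hx0I, hx0⟩ := hwnontriv
    have hT1 : |x0| < 1 := abs_lt.2 ⟨hx0I.1, hx0I.2⟩
    have hwT : w |x0| ≠ 0 := by
      rcases abs_choice x0 with h | h
      · rw [h]; exact hx0
      · rw [h]
        have := hweven x0 ⟨hx0I.1.le, hx0I.2.le⟩
        rw [this]; exact hx0
    have hwd : ∀ x ∈ Ioo (-1:ℝ) 1,
        HasDerivAt w (deriv w x) x ∧ HasDerivAt (deriv w) (deriv (deriv w) x) x :=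
      fun x hx => c2_hasDerivAt hw hx
    have hsubT : Icc (0:ℝ) |x0| ⊆ Ioo (-1:ℝ) 1 := fun z hz =>
      ⟨by linarith [hz.1], by linarith [hz.2, hT1]⟩
    have hzero := gronwall_zero w (deriv w) (fun x => -(lam * deriv f (u x)) * w x) 0 |x0|
      (lam * M) (by positivity)
      (fun x hx => (hwd x (hsubT hx)).1)
      (fun x hx => by
        have h := (hwd x (hsubT hx)).2
        have heq : deriv (deriv w) x = -(lam * deriv f (u x)) * w x := by
          have := hweq x (hsubT hx); linarith
        rwa [heq] at h)
      (fun x hx => by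
        have hm := hM x (Ioo_subset_Icc_self (hsubT hx))
        rw [abs_mul, abs_neg, abs_mul, abs_of_pos hlam]
        exact mul_le_mul_of_nonneg_right (mul_le_mul_of_nonneg_left hm hlam.le) (abs_nonneg _))
      hzero0 hw0
    exact hwT (hzero |x0| ⟨abs_nonneg _, le_rfl⟩)
  · left
    have hkey := key w hw hweq hwbc2 hpos0
    intro x hx
    rcases le_or_gt 0 x with h0 | h0
    · exact hkey x ⟨h0, hx.2⟩
    · have hmx : -x ∈ Ico (0:ℝ) 1 := ⟨by linarith, by linarith [hx.1]⟩
      have heqw : w x = w (-x) := by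
        have := hweven (-x) ⟨by linarith [hx.2], by linarith [hx.1]⟩
        simpa using this
      rw [heqw]
      exact hkey (-x) hmx
end

section
/- Let u be a positive singular solution of u'' + λ f(u) - μ g(x) = 0 on (-1,1) with u(±1) = 0 and u'(1) < 0, and let w > 0 on (-1,1) solve the linearized problem w'' + λ f'(u) w = 0, w(±1) = 0. Then ∫₀¹ f(u(x)) w(x) dx > 0. -/
open Set Real Filter Topology

/-- If `F ≥ 0` on `[-1,1]`, `F 1 = 0`, and `F` has a derivative `d` within `[-1,1]` at `1`,
then `d ≤ 0`. -/
lemma aux_endpoint_deriv_nonpos {F : ℝ → ℝ} {d : ℝ}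
    (hd : HasDerivWithinAt F d (Icc (-1:ℝ) 1) 1)
    (hF : ∀ x ∈ Icc (-1:ℝ) 1, 0 ≤ F x) (hF1 : F 1 = 0) : d ≤ 0 := by
  rw [hasDerivWithinAt_iff_tendsto_slope] at hd
  have hsub : Ioo (0:ℝ) 1 ⊆ Icc (-1:ℝ) 1 \ {1} := by
    intro y hy
    refine ⟨⟨by linarith [hy.1], hy.2.le⟩, by simp [ne_of_lt hy.2]⟩
  haveI hne : (𝓝[Ioo (0:ℝ) 1] (1:ℝ)).NeBot := right_nhdsWithin_Ioo_neBot (by norm_num)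
  have hd' := hd.mono_left (nhdsWithin_mono _ hsub)
  refine le_of_tendsto hd' ?_
  filter_upwards [self_mem_nhdsWithin] with y hy
  have h1 : slope F 1 y = (F y - F 1) / (y - 1) := by
    rw [slope_def_field]
  rw [h1, hF1, sub_zero]
  have hFy : 0 ≤ F y := hF y ⟨by linarith [hy.1], hy.2.le⟩
  have : y - 1 < 0 := by linarith [hy.2]
  exact div_nonpos_of_nonneg_of_nonpos hFy this.le

theorem transversality_integral_positive
    (lam mu : ℝ) (f g u w : ℝ → ℝ)
    (hlam : 0 < lam) (hmu : 0 < mu)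
    (hf : ContDiff ℝ 1 f)
    (hg1 : ContinuousOn g (Icc (-1) 1))
    (hg2 : ContDiffOn ℝ 1 g (Ioo (-1) 1))
    (hgeven : ∀ x ∈ Ioo (-1:ℝ) 1, g (-x) = g x)
    (hg0 : 0 < g 0)
    (hgmono : ∀ x ∈ Ioo (-1:ℝ) 1, 0 ≤ x * deriv g x)
    (hu : ContDiffOn ℝ 2 u (Icc (-1) 1))
    (hupos : ∀ x ∈ Ioo (-1:ℝ) 1, 0 < u x)
    (hueq : ∀ x ∈ Ioo (-1:ℝ) 1, deriv (deriv u) x + lam * f (u x) - mu * g x = 0)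
    (hubc1 : u (-1) = 0) (hubc2 : u 1 = 0)
    (hueven : ∀ x ∈ Icc (-1:ℝ) 1, u (-x) = u x)
    (hudec : ∀ x ∈ Ioc (0:ℝ) 1, deriv u x < 0)
    (hu1 : deriv u 1 < 0)
    (hw : ContDiffOn ℝ 2 w (Icc (-1) 1))
    (hwpos : ∀ x ∈ Ioo (-1:ℝ) 1, 0 < w x)
    (hweq : ∀ x ∈ Ioo (-1:ℝ) 1, deriv (deriv w) x + lam * deriv f (u x) * w x = 0)
    (hwbc1 : w (-1) = 0) (hwbc2 : w 1 = 0)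
    (hweven : ∀ x ∈ Icc (-1:ℝ) 1, w (-x) = w x)
    (hw0 : deriv w 0 = 0) :
    0 < ∫ x in (0:ℝ)..1, f (u x) * w x := by
  have hIu : UniqueDiffOn ℝ (Icc (-1:ℝ) 1) := uniqueDiffOn_Icc (by norm_num)
  set I : Set ℝ := Icc (-1:ℝ) 1 with hIdef
  set u1 := derivWithin u I with hu1def
  set w1 := derivWithin w I with hw1def
  set u2 := derivWithin u1 I with hu2def
  set w2 := derivWithin w1 I with hw2def
  have hone : (1:ℝ) ∈ I := by rw [hIdef]; exact right_mem_Icc.mpr (by norm_num)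
  have hIcc01 : Icc (0:ℝ) 1 ⊆ I := Icc_subset_Icc (by norm_num) le_rfl
  have hIoo01 : Ioo (0:ℝ) 1 ⊆ Ioo (-1:ℝ) 1 := Ioo_subset_Ioo (by norm_num) le_rfl
  -- smoothness of derivatives
  have hu1cd : ContDiffOn ℝ 1 u1 I := hu.derivWithin hIu (by norm_num)
  have hw1cd : ContDiffOn ℝ 1 w1 I := hw.derivWithin hIu (by norm_num)
  have hu2cont : ContinuousOn u2 I :=
    hu1cd.continuousOn_derivWithin hIu (by norm_num)
  have hw2cont : ContinuousOn w2 I :=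
    hw1cd.continuousOn_derivWithin hIu (by norm_num)
  have hucont : ContinuousOn u I := hu.continuousOn
  have hwcont : ContinuousOn w I := hw.continuousOn
  have hu1cont : ContinuousOn u1 I := hu1cd.continuousOn
  have hw1cont : ContinuousOn w1 I := hw1cd.continuousOn
  -- interior derivative facts
  have hmemI : ∀ x ∈ Ioo (-1:ℝ) 1, I ∈ 𝓝 x := fun x hx => Icc_mem_nhds hx.1 hx.2
  have hud : ∀ x ∈ Ioo (-1:ℝ) 1, HasDerivAt u (u1 x) x := by
    intro x hx
    have h := (hu.differentiableOn (by norm_num)).differentiableAt (hmemI x hx)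
    have he : u1 x = deriv u x := derivWithin_of_mem_nhds (hmemI x hx)
    rw [he]; exact h.hasDerivAt
  have hwd : ∀ x ∈ Ioo (-1:ℝ) 1, HasDerivAt w (w1 x) x := by
    intro x hx
    have h := (hw.differentiableOn (by norm_num)).differentiableAt (hmemI x hx)
    have he : w1 x = deriv w x := derivWithin_of_mem_nhds (hmemI x hx)
    rw [he]; exact h.hasDerivAt
  have hu1d : ∀ x ∈ Ioo (-1:ℝ) 1, HasDerivAt u1 (u2 x) x := by
    intro x hx
    have h := (hu1cd.differentiableOn one_ne_zero).differentiableAt (hmemI x hx)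
    have he : u2 x = deriv u1 x := derivWithin_of_mem_nhds (hmemI x hx)
    rw [he]; exact h.hasDerivAt
  have hw1d : ∀ x ∈ Ioo (-1:ℝ) 1, HasDerivAt w1 (w2 x) x := by
    intro x hx
    have h := (hw1cd.differentiableOn one_ne_zero).differentiableAt (hmemI x hx)
    have he : w2 x = deriv w1 x := derivWithin_of_mem_nhds (hmemI x hx)
    rw [he]; exact h.hasDerivAt
  have hu1_eq : ∀ x ∈ Ioo (-1:ℝ) 1, u1 x = deriv u x :=
    fun x hx => derivWithin_of_mem_nhds (hmemI x hx)
  have hw1_eq : ∀ x ∈ Ioo (-1:ℝ) 1, w1 x = deriv w x :=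
    fun x hx => derivWithin_of_mem_nhds (hmemI x hx)
  have hu2_eq : ∀ x ∈ Ioo (-1:ℝ) 1, u2 x = mu * g x - lam * f (u x) := by
    intro x hx
    have h1 : u2 x = deriv u1 x := derivWithin_of_mem_nhds (hmemI x hx)
    have h2 : u1 =ᶠ[𝓝 x] deriv u :=
      Filter.eventually_of_mem (isOpen_Ioo.mem_nhds hx) (fun y hy => hu1_eq y hy)
    have h3 : deriv u1 x = deriv (deriv u) x := h2.deriv_eq
    have h4 := hueq x hx
    rw [h1, h3]; linarith
  have hw2_eq : ∀ x ∈ Ioo (-1:ℝ) 1, w2 x = -(lam * deriv f (u x) * w x) := by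
    intro x hx
    have h1 : w2 x = deriv w1 x := derivWithin_of_mem_nhds (hmemI x hx)
    have h2 : w1 =ᶠ[𝓝 x] deriv w :=
      Filter.eventually_of_mem (isOpen_Ioo.mem_nhds hx) (fun y hy => hw1_eq y hy)
    have h3 : deriv w1 x = deriv (deriv w) x := h2.deriv_eq
    have h4 := hweq x hx
    rw [h1, h3]; linarith
  -- u1 0 = 0, w1 0 = 0
  have h0mem : (0:ℝ) ∈ Ioo (-1:ℝ) 1 := by rw [mem_Ioo]; norm_num
  have hu1_0 : u1 0 = 0 := by
    have hd := hud 0 h0mem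
    have hd0 : HasDerivAt u (u1 0) (-(0:ℝ)) := by rw [neg_zero]; exact hd
    have hcomp : HasDerivAt (fun x => u (-x)) (u1 0 * (-1)) 0 := hd0.comp 0 (hasDerivAt_neg (0:ℝ))
    have heq : (fun x => u (-x)) =ᶠ[𝓝 (0:ℝ)] u :=
      Filter.eventually_of_mem (hmemI 0 h0mem) (fun y hy => hueven y hy)
    have hd2 : HasDerivAt u (u1 0 * (-1)) 0 := hcomp.congr_of_eventuallyEq heq.symm
    have := hd2.unique hd
    linarith
  have hw1_0 : w1 0 = 0 := by
    have := hw1_eq 0 h0mem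
    rw [this, hw0]
  -- nonnegativity
  have hunn : ∀ x ∈ I, 0 ≤ u x := by
    intro x hx
    rcases eq_or_lt_of_le hx.1 with h | h
    · rw [← h, hubc1]
    rcases eq_or_lt_of_le hx.2 with h' | h'
    · rw [h', hubc2]
    · exact (hupos x ⟨h, h'⟩).le
  have hwnn : ∀ x ∈ I, 0 ≤ w x := by
    intro x hx
    rcases eq_or_lt_of_le hx.1 with h | h
    · rw [← h, hwbc1]
    rcases eq_or_lt_of_le hx.2 with h' | h'
    · rw [h', hwbc2]
    · exact (hwpos x ⟨h, h'⟩).le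
  -- endpoint derivatives nonpositive
  have hu1_1 : u1 1 ≤ 0 :=
    aux_endpoint_deriv_nonpos
      ((hu.differentiableOn (by norm_num) 1 hone).hasDerivWithinAt) hunn hubc2
  have hw1_1 : w1 1 ≤ 0 :=
    aux_endpoint_deriv_nonpos
      ((hw.differentiableOn (by norm_num) 1 hone).hasDerivWithinAt) hwnn hwbc2
  -- integrability helpers
  have huIcc : uIcc (0:ℝ) 1 = Icc (0:ℝ) 1 := uIcc_of_le (by norm_num)
  have hint : ∀ F : ℝ → ℝ, ContinuousOn F I → IntervalIntegrable F MeasureTheory.volume 0 1 := by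
    intro F hF
    apply ContinuousOn.intervalIntegrable
    rw [huIcc]; exact hF.mono hIcc01
  -- Step A : ∫ (u2 w + u1 w1) = 0
  have hstepA : ∫ x in (0:ℝ)..1, (u2 x * w x + u1 x * w1 x) = 0 := by
    have hftc := intervalIntegral.integral_eq_sub_of_hasDerivAt_of_le (by norm_num : (0:ℝ) ≤ 1)
      (f := fun x => u1 x * w x) (f' := fun x => u2 x * w x + u1 x * w1 x)
      ((hu1cont.mono hIcc01).mul (hwcont.mono hIcc01))
      (fun x hx => (hu1d x (hIoo01 hx)).mul (hwd x (hIoo01 hx)))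
      (hint _ ((hu2cont.mul hwcont).add (hu1cont.mul hw1cont)))
    rw [hftc]
    simp [hwbc2, hu1_0]
  -- Step B : lam * ∫ f(u) w = mu * ∫ g w + ∫ u1 w1
  have hae1 : ∀ᵐ x : ℝ, x ≠ (1:ℝ) := by
    have h1 : MeasureTheory.volume ({(1:ℝ)} : Set ℝ) = 0 := Real.volume_singleton
    rw [← MeasureTheory.compl_mem_ae_iff] at h1
    filter_upwards [h1] with x hx
    simpa using hx
  have hcongr : ∫ x in (0:ℝ)..1, lam * (f (u x) * w x)
      = ∫ x in (0:ℝ)..1, (mu * (g x * w x) - u2 x * w x) := by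
    apply intervalIntegral.integral_congr_ae
    filter_upwards [hae1] with x hx1 hx
    rw [uIoc_of_le (by norm_num : (0:ℝ) ≤ 1)] at hx
    have hxI : x ∈ Ioo (-1:ℝ) 1 := ⟨by linarith [hx.1], lt_of_le_of_ne hx.2 hx1⟩
    rw [hu2_eq x hxI]
    ring
  have hintgw : IntervalIntegrable (fun x => g x * w x) MeasureTheory.volume 0 1 :=
    hint _ (hg1.mul hwcont)
  have hintu2w : IntervalIntegrable (fun x => u2 x * w x) MeasureTheory.volume 0 1 :=
    hint _ (hu2cont.mul hwcont)
  have hintu1w1 : IntervalIntegrable (fun x => u1 x * w1 x) MeasureTheory.volume 0 1 :=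
    hint _ (hu1cont.mul hw1cont)
  have hstepB : lam * ∫ x in (0:ℝ)..1, f (u x) * w x
      = mu * (∫ x in (0:ℝ)..1, g x * w x) + ∫ x in (0:ℝ)..1, u1 x * w1 x := by
    have h1 : lam * ∫ x in (0:ℝ)..1, f (u x) * w x
        = ∫ x in (0:ℝ)..1, lam * (f (u x) * w x) := by
      rw [intervalIntegral.integral_const_mul]
    have h2 : ∫ x in (0:ℝ)..1, (mu * (g x * w x) - u2 x * w x)
        = mu * (∫ x in (0:ℝ)..1, g x * w x) - ∫ x in (0:ℝ)..1, u2 x * w x := by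
      rw [intervalIntegral.integral_sub (hintgw.const_mul mu) hintu2w,
        intervalIntegral.integral_const_mul]
    have h3 : ∫ x in (0:ℝ)..1, u2 x * w x = - ∫ x in (0:ℝ)..1, u1 x * w1 x := by
      have := intervalIntegral.integral_add hintu2w hintu1w1
      rw [hstepA] at this
      linarith
    rw [h1, hcongr, h2, h3]
    ring
  -- Step C : 0 < ∫ g w
  have hgmon : MonotoneOn g (Icc (0:ℝ) 1) := by
    apply monotoneOn_of_deriv_nonneg (convex_Icc 0 1) (hg1.mono hIcc01)
    · rw [interior_Icc]
      exact fun x hx => ((hg2.differentiableOn one_ne_zero).differentiableAt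
        (isOpen_Ioo.mem_nhds (hIoo01 hx))).differentiableWithinAt
    · rw [interior_Icc]
      intro x hx
      have := hgmono x (hIoo01 hx)
      exact (mul_nonneg_iff_of_pos_left hx.1).mp this
  have hgpos : ∀ x ∈ Icc (0:ℝ) 1, 0 < g x := by
    intro x hx
    have := hgmon (left_mem_Icc.mpr (by norm_num)) hx hx.1
    linarith
  have hstepC : 0 < ∫ x in (0:ℝ)..1, g x * w x := by
    apply intervalIntegral.intervalIntegral_pos_of_pos_on hintgw
    · intro x hx
      exact mul_pos (hgpos x ⟨hx.1.le, hx.2.le⟩) (hwpos x (hIoo01 hx))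
    · norm_num
  -- Step D : 0 ≤ ∫ u1 w1
  have hstepD : 0 ≤ ∫ x in (0:ℝ)..1, u1 x * w1 x := by
    set h : ℝ → ℝ := fun t => 2 * (u1 t * w1 t) with hhdef
    have hhcont : ContinuousOn h I := (continuousOn_const.mul (hu1cont.mul hw1cont))
    have hhint : IntervalIntegrable h MeasureTheory.volume 0 1 := hint _ hhcont
    set P : ℝ → ℝ := fun x => ∫ t in (0:ℝ)..x, h t with hPdef
    set Φ : ℝ → ℝ := fun x => x * (u1 x * w1 x) - x * (u2 x * w x) + u1 x * w x with hΦdef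
    set ψ : ℝ → ℝ := fun x => P x - Φ x with hψdef
    have hPcont : ContinuousOn P (Icc (0:ℝ) 1) := by
      have := intervalIntegral.continuousOn_primitive_interval
        (f := h) (a := (0:ℝ)) (b := 1) (μ := MeasureTheory.volume) ?_
      · rw [huIcc] at this; exact this
      · rw [huIcc]
        exact (hhcont.mono hIcc01).integrableOn_Icc
    have hΦcont : ContinuousOn Φ (Icc (0:ℝ) 1) := by
      apply ContinuousOn.add
      apply ContinuousOn.sub
      · exact continuousOn_id.mul ((hu1cont.mono hIcc01).mul (hw1cont.mono hIcc01))
      · exact continuousOn_id.mul ((hu2cont.mono hIcc01).mul (hwcont.mono hIcc01))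
      · exact (hu1cont.mono hIcc01).mul (hwcont.mono hIcc01)
    -- derivative of ψ on interior
    have hψd : ∀ x ∈ Ioo (0:ℝ) 1, HasDerivAt ψ (mu * (x * (deriv g x * w x))) x := by
      intro x hx
      have hxI : x ∈ Ioo (-1:ℝ) 1 := hIoo01 hx
      -- derivative of P
      have hPd : HasDerivAt P (h x) x := by
        apply intervalIntegral.integral_hasDerivAt_right
          (hhint.mono_set ?_)
          ⟨Ioo (-1:ℝ) 1, isOpen_Ioo.mem_nhds hxI,
            ((hhcont.mono Ioo_subset_Icc_self).aestronglyMeasurable measurableSet_Ioo)⟩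
          (hhcont.continuousAt (hmemI x hxI))
        rw [huIcc, uIcc_of_le hx.1.le]
        exact Icc_subset_Icc le_rfl hx.2.le
      -- derivative of u2
      have hgd : HasDerivAt g (deriv g x) x :=
        ((hg2.differentiableOn one_ne_zero).differentiableAt (isOpen_Ioo.mem_nhds hxI)).hasDerivAt
      have hfd : HasDerivAt f (deriv f (u x)) (u x) :=
        ((hf.differentiable one_ne_zero) (u x)).hasDerivAt
      have hfud : HasDerivAt (fun y => f (u y)) (deriv f (u x) * u1 x) x :=
        hfd.comp x (hud x hxI)
      have hGd : HasDerivAt (fun y => mu * g y - lam * f (u y))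
          (mu * deriv g x - lam * (deriv f (u x) * u1 x)) x :=
        (hgd.const_mul mu).sub (hfud.const_mul lam)
      have heqG : u2 =ᶠ[𝓝 x] (fun y => mu * g y - lam * f (u y)) :=
        Filter.eventually_of_mem (isOpen_Ioo.mem_nhds hxI) (fun y hy => hu2_eq y hy)
      have hu2d : HasDerivAt u2 (mu * deriv g x - lam * (deriv f (u x) * u1 x)) x :=
        hGd.congr_of_eventuallyEq heqG
      -- derivative of Φ
      have t1 : HasDerivAt (fun y => y * (u1 y * w1 y))
          (1 * (u1 x * w1 x) + x * (u2 x * w1 x + u1 x * w2 x)) x :=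
        (hasDerivAt_id x).mul ((hu1d x hxI).mul (hw1d x hxI))
      have t2 : HasDerivAt (fun y => y * (u2 y * w y))
          (1 * (u2 x * w x) + x * ((mu * deriv g x - lam * (deriv f (u x) * u1 x)) * w x
            + u2 x * w1 x)) x :=
        (hasDerivAt_id x).mul (hu2d.mul (hwd x hxI))
      have t3 : HasDerivAt (fun y => u1 y * w y) (u2 x * w x + u1 x * w1 x) x :=
        (hu1d x hxI).mul (hwd x hxI)
      have hΦd : HasDerivAt Φ (h x - mu * (x * (deriv g x * w x))) x := by
        have := (t1.sub t2).add t3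
        refine (this : HasDerivAt Φ _ x).congr_deriv ?_
        rw [hhdef]
        simp only []
        rw [hw2_eq x hxI]
        ring
      have := hPd.sub hΦd
      refine (this : HasDerivAt ψ _ x).congr_deriv ?_
      ring
    -- ψ is monotone on [0,1]
    have hψmono : MonotoneOn ψ (Icc (0:ℝ) 1) := by
      apply monotoneOn_of_deriv_nonneg (convex_Icc 0 1) (hPcont.sub hΦcont)
      · rw [interior_Icc]
        exact fun x hx => ((hψd x hx).differentiableAt).differentiableWithinAt
      · rw [interior_Icc]
        intro x hx
        change 0 ≤ deriv ψ x
        rw [(hψd x hx).deriv]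
        have h1 := hgmono x (hIoo01 hx)
        have h2 := (hwpos x (hIoo01 hx)).le
        nlinarith [mul_nonneg (mul_nonneg hmu.le h1) h2]
    have hψ01 : ψ 0 ≤ ψ 1 :=
      hψmono (left_mem_Icc.mpr (by norm_num)) (right_mem_Icc.mpr (by norm_num)) (by norm_num)
    have hψ0 : ψ 0 = 0 := by
      simp only [hψdef, hPdef, hΦdef, intervalIntegral.integral_same, hu1_0]
      ring
    have hψ1 : ψ 1 = (∫ t in (0:ℝ)..1, h t) - u1 1 * w1 1 := by
      simp only [hψdef, hPdef, hΦdef, hwbc2]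
      ring
    have hPint : ∫ t in (0:ℝ)..1, h t = 2 * ∫ x in (0:ℝ)..1, u1 x * w1 x := by
      rw [hhdef, intervalIntegral.integral_const_mul]
    have hprod : 0 ≤ u1 1 * w1 1 := by nlinarith [hu1_1, hw1_1]
    rw [hψ0, hψ1, hPint] at hψ01
    linarith
  -- conclusion
  have hkey : 0 < lam * ∫ x in (0:ℝ)..1, f (u x) * w x := by
    rw [hstepB]
    have := mul_pos hmu hstepC
    linarith
  nlinarith
end

section
/- The problem u'' + λ u(1-u) - μ = 0 on (-1,1), u(-1) = u(1) = 0, with λ > 0 and μ > 0, has no positive solution when λ ≤ π²/4. -/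
open Set Real

theorem no_positive_solution_below_principal_eigenvalue
    (lam mu : ℝ) (u : ℝ → ℝ)
    (hlam : 0 < lam) (hmu : 0 < mu)
    (hlam_le : lam ≤ Real.pi ^ 2 / 4)
    (hu : ContDiffOn ℝ 2 u (Icc (-1) 1))
    (hupos : ∀ x ∈ Ioo (-1:ℝ) 1, 0 < u x)
    (hueq : ∀ x ∈ Ioo (-1:ℝ) 1,
      deriv (deriv u) x + lam * u x * (1 - u x) - mu = 0)
    (hubc1 : u (-1) = 0) (hubc2 : u 1 = 0) :
    False := by
  have pi_pos := Real.pi_pos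
  set g : ℝ → ℝ := derivWithin u (Icc (-1) 1) with hg_def
  set W : ℝ → ℝ := fun x => g x * Real.cos (Real.pi / 2 * x)
      + u x * (Real.pi / 2 * Real.sin (Real.pi / 2 * x)) with hW_def
  have huniq : UniqueDiffOn ℝ (Icc (-1:ℝ) 1) := uniqueDiffOn_Icc (by norm_num)
  have hg_cont : ContinuousOn g (Icc (-1:ℝ) 1) :=
    hu.continuousOn_derivWithin huniq (by norm_num)
  have hW_cont : ContinuousOn W (Icc (-1:ℝ) 1) := by
    apply ContinuousOn.add
    · exact hg_cont.mul (Real.continuous_cos.comp (continuous_const.mul continuous_id)).continuousOn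
    · exact hu.continuousOn.mul
        ((continuous_const.mul (Real.continuous_sin.comp (continuous_const.mul continuous_id))).continuousOn)
  -- derivative of W on the open interval
  have hWderiv : ∀ x ∈ Ioo (-1:ℝ) 1, 0 < deriv W x := by
    intro x hx
    have hnhds : Icc (-1:ℝ) 1 ∈ nhds x := Icc_mem_nhds hx.1 hx.2
    have hopen : IsOpen (Ioo (-1:ℝ) 1) := isOpen_Ioo
    have hIoo_nhds : Ioo (-1:ℝ) 1 ∈ nhds x := hopen.mem_nhds hx
    -- g = deriv u near x
    have hgev : g =ᶠ[nhds x] deriv u := by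
      filter_upwards [hIoo_nhds] with y hy
      exact derivWithin_of_mem_nhds (Icc_mem_nhds hy.1 hy.2)
    have hgx : g x = deriv u x := derivWithin_of_mem_nhds hnhds
    -- u is C² on the open interval
    have huIoo : ContDiffOn ℝ 2 u (Ioo (-1:ℝ) 1) := hu.mono Ioo_subset_Icc_self
    have hud : DifferentiableOn ℝ u (Ioo (-1:ℝ) 1) :=
      huIoo.differentiableOn (by norm_num)
    have hu'cd : ContDiffOn ℝ 1 (deriv u) (Ioo (-1:ℝ) 1) := by
      have := huIoo.deriv_of_isOpen (m := 1) hopen (by norm_num)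
      exact this
    have hu'd : DifferentiableOn ℝ (deriv u) (Ioo (-1:ℝ) 1) :=
      hu'cd.differentiableOn one_ne_zero
    have h1 : HasDerivAt u (deriv u x) x :=
      ((hud x hx).differentiableAt hIoo_nhds).hasDerivAt
    have h2 : HasDerivAt (deriv u) (deriv (deriv u) x) x :=
      ((hu'd x hx).differentiableAt hIoo_nhds).hasDerivAt
    have hgd : HasDerivAt g (deriv (deriv u) x) x := by
      exact h2.congr_of_eventuallyEq hgev
    -- trig derivatives
    have hlin : HasDerivAt (fun y : ℝ => Real.pi / 2 * y) (Real.pi / 2) x := by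
      simpa using (hasDerivAt_id x).const_mul (Real.pi / 2)
    have hcos : HasDerivAt (fun y : ℝ => Real.cos (Real.pi / 2 * y))
        (-Real.sin (Real.pi / 2 * x) * (Real.pi / 2)) x :=
      (Real.hasDerivAt_cos (Real.pi / 2 * x)).comp x hlin
    have hsin : HasDerivAt (fun y : ℝ => Real.sin (Real.pi / 2 * y))
        (Real.cos (Real.pi / 2 * x) * (Real.pi / 2)) x :=
      (Real.hasDerivAt_sin (Real.pi / 2 * x)).comp x hlin
    have hW : HasDerivAt W
        ((deriv (deriv u) x * Real.cos (Real.pi / 2 * x)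
          + g x * (-Real.sin (Real.pi / 2 * x) * (Real.pi / 2)))
         + (deriv u x * (Real.pi / 2 * Real.sin (Real.pi / 2 * x))
          + u x * (Real.pi / 2 * (Real.cos (Real.pi / 2 * x) * (Real.pi / 2))))) x := by
      exact (hgd.mul hcos).add (h1.mul (hsin.const_mul (Real.pi / 2)))
    have hu'' : deriv (deriv u) x = mu - lam * u x * (1 - u x) := by
      have := hueq x hx
      linarith
    have hcospos : 0 < Real.cos (Real.pi / 2 * x) := by
      apply Real.cos_pos_of_mem_Ioo
      constructor
      · nlinarith [hx.1]
      · nlinarith [hx.2]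
    have hux := hupos x hx
    rw [hW.deriv, hgx, hu'']
    have hkey : (mu - lam * u x * (1 - u x)) * Real.cos (Real.pi / 2 * x)
          + deriv u x * (-Real.sin (Real.pi / 2 * x) * (Real.pi / 2))
          + (deriv u x * (Real.pi / 2 * Real.sin (Real.pi / 2 * x))
          + u x * (Real.pi / 2 * (Real.cos (Real.pi / 2 * x) * (Real.pi / 2))))
        = (mu + (Real.pi ^ 2 / 4 - lam) * u x + lam * u x ^ 2)
            * Real.cos (Real.pi / 2 * x) := by ring
    have : 0 < (mu + (Real.pi ^ 2 / 4 - lam) * u x + lam * u x ^ 2)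
        * Real.cos (Real.pi / 2 * x) := by
      apply mul_pos _ hcospos
      nlinarith [sq_nonneg (u x)]
    linarith [hkey]
  -- strict monotonicity
  have hmono : StrictMonoOn W (Icc (-1:ℝ) 1) := by
    apply strictMonoOn_of_deriv_pos (convex_Icc _ _) hW_cont
    intro x hx
    rw [interior_Icc] at hx
    exact hWderiv x hx
  have hW1 : W 1 = 0 := by
    simp only [hW_def, hubc2, mul_one, zero_mul, add_zero, zero_add, mul_zero]
    rw [Real.cos_pi_div_two]
    ring
  have hWm1 : W (-1) = 0 := by
    simp only [hW_def, hubc1, zero_mul, add_zero, zero_add]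
    have : Real.pi / 2 * (-1) = -(Real.pi / 2) := by ring
    rw [this, Real.cos_neg, Real.cos_pi_div_two]
    ring
  have := hmono (left_mem_Icc.mpr (by norm_num)) (right_mem_Icc.mpr (by norm_num))
    (by norm_num : (-1:ℝ) < 1)
  rw [hWm1, hW1] at this
  exact lt_irrefl 0 this
end

section
/- Any positive solution of u'' + λ u(1-u) - μ = 0 on (-1,1) with u(±1) = 0, λ > 0, μ > 0, satisfies 0 < u(x) < 1 for all x ∈ (-1,1). -/
open Set Real Filter Topology

theorem logistic_solution_below_one
    (lam mu : ℝ) (u : ℝ → ℝ)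
    (hlam : 0 < lam) (hmu : 0 < mu)
    (hu : ContDiffOn ℝ 2 u (Icc (-1) 1))
    (hupos : ∀ x ∈ Ioo (-1:ℝ) 1, 0 < u x)
    (hueq : ∀ x ∈ Ioo (-1:ℝ) 1,
      deriv (deriv u) x + lam * u x * (1 - u x) - mu = 0)
    (hubc1 : u (-1) = 0) (hubc2 : u 1 = 0) :
    ∀ x ∈ Ioo (-1:ℝ) 1, u x < 1 := by
  have hIoo : IsOpen (Ioo (-1:ℝ) 1) := isOpen_Ioo
  have hu2 : ContDiffOn ℝ 2 u (Ioo (-1) 1) := hu.mono Ioo_subset_Icc_self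
  have hu' : ContDiffOn ℝ 1 (deriv u) (Ioo (-1) 1) :=
    hu2.deriv_of_isOpen hIoo (by norm_num)
  have hu'diff : ∀ x ∈ Ioo (-1:ℝ) 1, DifferentiableAt ℝ (deriv u) x := fun x hx =>
    ((hu'.differentiableOn one_ne_zero).differentiableAt (hIoo.mem_nhds hx))
  -- max of u on Icc
  obtain ⟨x0, hx0m, hx0max⟩ := isCompact_Icc.exists_isMaxOn (nonempty_Icc.2 (by norm_num))
    hu.continuousOn
  by_contra h
  push_neg at h
  obtain ⟨z, hz, hz1⟩ := h
  have hx0ge : 1 ≤ u x0 := hz1.trans (hx0max (Ioo_subset_Icc_self hz))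
  have hx0 : x0 ∈ Ioo (-1:ℝ) 1 := by
    rcases hx0m.1.lt_or_eq with h1 | h1
    · rcases hx0m.2.lt_or_eq with h2 | h2
      · exact ⟨h1, h2⟩
      · rw [h2, hubc2] at hx0ge; linarith
    · rw [← h1, hubc1] at hx0ge; linarith
  have hloc : IsLocalMax u x0 := hx0max.isLocalMax (Icc_mem_nhds hx0.1 hx0.2)
  have hderiv0 : deriv u x0 = 0 := hloc.deriv_eq_zero
  set c := deriv (deriv u) x0 with hc
  have hcval : c = mu - lam * u x0 * (1 - u x0) := by
    have := hueq x0 hx0; linarith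
  have hcpos : 0 < c := by
    have hle : lam * u x0 * (1 - u x0) ≤ 0 :=
      mul_nonpos_of_nonneg_of_nonpos (mul_pos hlam (hupos x0 hx0)).le (by linarith)
    linarith
  have hDA : HasDerivAt (deriv u) c x0 := (hu'diff x0 hx0).hasDerivAt
  rw [hasDerivAt_iff_tendsto_slope] at hDA
  have hev : ∀ᶠ y in 𝓝[>] x0, 0 < slope (deriv u) x0 y :=
    (hDA.eventually (eventually_gt_nhds hcpos)).filter_mono
      (nhdsWithin_mono x0 fun y hy => ne_of_gt hy)
  obtain ⟨b, hb, hsub⟩ := mem_nhdsGT_iff_exists_Ioo_subset.1 hev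
  set b' : ℝ := min b 1 with hb'
  have hx0b' : x0 < b' := lt_min hb hx0.2
  have hdpos : ∀ y ∈ Ioo x0 b', 0 < deriv u y := by
    intro y hy
    have hs : 0 < slope (deriv u) x0 y := hsub ⟨hy.1, lt_of_lt_of_le hy.2 (min_le_left _ _)⟩
    rw [slope_def_field, hderiv0, sub_zero, div_pos_iff] at hs
    rcases hs with ⟨h1, _⟩ | ⟨_, h2⟩
    · exact h1
    · linarith [hy.1]
  set m : ℝ := (x0 + b') / 2 with hm
  have hmIoo : m ∈ Ioo x0 b' := ⟨by simp [hm]; linarith, by simp [hm]; linarith⟩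
  have hmono : StrictMonoOn u (Icc x0 m) := by
    apply strictMonoOn_of_deriv_pos (convex_Icc _ _)
    · apply hu.continuousOn.mono
      intro y hy
      constructor
      · linarith [hy.1, hx0.1]
      · have : y ≤ m := hy.2
        have hb'le : b' ≤ 1 := min_le_right _ _
        have : m < b' := hmIoo.2
        linarith
    · intro y hy
      rw [interior_Icc] at hy
      exact hdpos y ⟨hy.1, lt_trans hy.2 hmIoo.2⟩
  have h1 : u x0 < u m := hmono (left_mem_Icc.2 hmIoo.1.le) (right_mem_Icc.2 hmIoo.1.le) hmIoo.1
  have h2 : u m ≤ u x0 := hx0max (by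
    constructor
    · linarith [hmIoo.1, hx0.1]
    · have hb'le : b' ≤ 1 := min_le_right _ _
      linarith [hmIoo.2])
  linarith
end
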